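/- arXiv:1606.01586 — 3 statements merged into one kernel-verified Lean document; each statement's English description precedes it below -/
import Mathlib

section
/- Let (Ω, F, P) be a finite probability space and let Y_0, Y_1, …, Y_n be a martingale with respect to a filter F_0 ⊆ F_1 ⊆ ⋯ ⊆ F_n of σ-subfields of F with F_0 = {∅, Ω}. Suppose that Σ_{j=1}^n ( ran(Y_j | F_{j−1}) )² ≤ r̂² almost surely, for some real r̂. Then E e^{Y_n} = e^{Y_0 + K} for some real constant K with 0 ≤ K ≤ r̂²/8. -/
open MeasureTheory

/-- The atom of the σ-field `m'` containing `ω` (on a finite space this is the smallest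
`m'`-measurable set containing `ω`). -/
def condAtom {Ω : Type*} (m' : MeasurableSpace Ω) (ω : Ω) : Set Ω :=
  ⋂₀ {s | MeasurableSet[m'] s ∧ ω ∈ s}

/-- The conditional range `ran(f ∣ m') = ess sup(f ∣ m') + ess sup(−f ∣ m')`: on the atom
of `m'` containing `ω`, the essential supremum of `f` (resp. `−f`) over that atom, i.e. the
supremum of the values of `f` (resp. `−f`) at the points of the atom of positive measure. -/
noncomputable def condRange {Ω : Type*} [MeasurableSpace Ω] (μ : Measure Ω)
    (m' : MeasurableSpace Ω) (f : Ω → ℝ) (ω : Ω) : ℝ :=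
  sSup {y | ∃ ω' ∈ condAtom m' ω, μ {ω'} ≠ 0 ∧ f ω' = y} +
  sSup {y | ∃ ω' ∈ condAtom m' ω, μ {ω'} ≠ 0 ∧ -f ω' = y}


open Real



lemma hoeffding_calc {p : ℝ} (hp0 : 0 ≤ p) (hp1 : p ≤ 1) {u : ℝ} (hu : 0 ≤ u) :
    1 - p + p * exp u ≤ exp (p * u + u ^ 2 / 8) := by
  have hD : ∀ x : ℝ, 0 < 1 - p + p * exp x := by
    intro x
    rcases lt_or_eq_of_le hp1 with h | h
    · nlinarith [exp_pos x]
    · nlinarith [exp_pos x]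
  set g : ℝ → ℝ := fun u => p * u + u ^ 2 / 8 - Real.log (1 - p + p * exp u) with hg
  set g' : ℝ → ℝ := fun u => p + u / 4 - p * exp u / (1 - p + p * exp u) with hg'
  have hDd : ∀ x : ℝ, HasDerivAt (fun y => 1 - p + p * exp y) (p * exp x) x := by
    intro x
    simpa using ((Real.hasDerivAt_exp x).const_mul p).const_add (1 - p)
  have hgd : ∀ x : ℝ, HasDerivAt g (g' x) x := by
    intro x
    have h1 : HasDerivAt (fun y : ℝ => p * y + y ^ 2 / 8) (p + x * 2 / 8) x := by
      have := ((hasDerivAt_id x).const_mul p).fun_add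
        (((hasDerivAt_pow 2 x)).div_const 8)
      simpa [mul_comm] using this
    have h2 : HasDerivAt (fun y => Real.log (1 - p + p * exp y))
        (p * exp x / (1 - p + p * exp x)) x := (hDd x).log (hD x).ne'
    have := h1.fun_sub h2
    refine this.congr_deriv ?_
    simp only [hg']
    ring
  have hg'd : ∀ x : ℝ, HasDerivAt g'
      (1/4 - (p * exp x * (1 - p + p * exp x) - p * exp x * (p * exp x)) /
        (1 - p + p * exp x) ^ 2) x := by
    intro x
    have h2 : HasDerivAt (fun y => p * exp y / (1 - p + p * exp y))
        ((p * exp x * (1 - p + p * exp x) - p * exp x * (p * exp x)) /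
          (1 - p + p * exp x) ^ 2) x :=
      ((Real.hasDerivAt_exp x).const_mul p).div (hDd x) (hD x).ne'
    have h1 : HasDerivAt (fun y : ℝ => p + y / 4) (1/4) x := by
      simpa using ((hasDerivAt_id x).div_const 4).const_add p
    simpa using h1.fun_sub h2
  have hg'' : ∀ x : ℝ, 0 ≤ 1/4 - (p * exp x * (1 - p + p * exp x) - p * exp x * (p * exp x)) /
        (1 - p + p * exp x) ^ 2 := by
    intro x
    set q := p * exp x with hq
    set d := 1 - p + p * exp x with hd
    have hq0 : 0 ≤ q := by positivity
    have hqd : q ≤ d := by rw [hq, hd]; nlinarith [exp_pos x]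
    have hd0 : (0:ℝ) < d := hD x
    rw [sub_nonneg, div_le_iff₀ (by positivity)]
    nlinarith [sq_nonneg (d - 2*q)]
  -- g' is monotone
  have hmono' : Monotone g' :=
    monotone_of_deriv_nonneg (fun x => (hg'd x).differentiableAt)
      (fun x => by rw [(hg'd x).deriv]; exact hg'' x)
  have hg'0 : g' 0 = 0 := by simp [hg']
  have hg'nonneg : ∀ x : ℝ, 0 ≤ x → 0 ≤ g' x := fun x hx => hg'0 ▸ hmono' hx
  have hmono : MonotoneOn g (Set.Ici 0) := by
    apply monotoneOn_of_deriv_nonneg (convex_Ici 0)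
      (fun x _ => (hgd x).continuousAt.continuousWithinAt)
      (fun x _ => (hgd x).differentiableAt.differentiableWithinAt)
    intro x hx
    rw [interior_Ici] at hx
    rw [(hgd x).deriv]
    exact hg'nonneg x hx.le
  have hg0 : g 0 = 0 := by simp [hg]
  have hgu : 0 ≤ g u := hg0 ▸ hmono Set.self_mem_Ici hu hu
  have : Real.log (1 - p + p * exp u) ≤ p * u + u ^ 2 / 8 := by
    simp only [hg] at hgu; linarith
  calc 1 - p + p * exp u = exp (Real.log (1 - p + p * exp u)) := (Real.exp_log (hD u)).symm
    _ ≤ exp (p * u + u ^ 2 / 8) := exp_le_exp.2 this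
lemma hoeffding_lemma {Ω : Type*} [MeasurableSpace Ω] (ν : Measure Ω) [IsProbabilityMeasure ν]
    {X : Ω → ℝ} {a b : ℝ} (hX : Integrable X ν)
    (hint : Integrable (fun ω => Real.exp (X ω)) ν)
    (hab : ∀ᵐ ω ∂ν, X ω ∈ Set.Icc a b) (h0 : ∫ ω, X ω ∂ν = 0) :
    ∫ ω, Real.exp (X ω) ∂ν ≤ Real.exp ((b - a) ^ 2 / 8) := by
  have ha0 : a ≤ 0 := by
    have : ∫ ω, (a:ℝ) ∂ν ≤ ∫ ω, X ω ∂ν :=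
      integral_mono_ae (integrable_const a) hX (hab.mono fun ω h => h.1)
    simpa [h0] using this
  have hb0 : 0 ≤ b := by
    have : ∫ ω, X ω ∂ν ≤ ∫ ω, (b:ℝ) ∂ν :=
      integral_mono_ae hX (integrable_const b) (hab.mono fun ω h => h.2)
    simpa [h0] using this
  rcases eq_or_lt_of_le (ha0.trans hb0) with hab' | hab'
  · have hb : b = 0 := le_antisymm (hab' ▸ ha0) hb0
    have : ∫ ω, Real.exp (X ω) ∂ν ≤ ∫ ω, (1:ℝ) ∂ν := by
      apply integral_mono_ae hint (integrable_const 1)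
      filter_upwards [hab] with ω h
      calc Real.exp (X ω) ≤ Real.exp b := Real.exp_le_exp.2 h.2
        _ = 1 := by rw [hb, Real.exp_zero]
    have h2 : (1:ℝ) ≤ Real.exp ((b - a) ^ 2 / 8) := by
      rw [← Real.exp_zero]
      apply Real.exp_le_exp.2
      positivity
    calc ∫ ω, Real.exp (X ω) ∂ν ≤ ∫ ω, (1:ℝ) ∂ν := this
      _ = 1 := by simp
      _ ≤ _ := h2
  · set u := b - a with hu
    have hu0 : 0 < u := sub_pos.2 hab'
    set p := -a / u with hp
    have hp0 : 0 ≤ p := div_nonneg (by linarith) hu0.le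
    have hp1 : p ≤ 1 := by rw [hp, div_le_one hu0]; linarith
    set c₁ := (Real.exp b - Real.exp a) / u with hc₁
    set c₂ := (b * Real.exp a - a * Real.exp b) / u with hc₂
    have key : ∀ᵐ ω ∂ν, Real.exp (X ω) ≤ c₁ * X ω + c₂ := by
      filter_upwards [hab] with ω h
      have h1 : X ω = (b - X ω) / u * a + (X ω - a) / u * b := by
        field_simp; ring
      have hcv := convexOn_exp.2 (Set.mem_univ a) (Set.mem_univ b)
        (div_nonneg (sub_nonneg.2 h.2) hu0.le) (div_nonneg (sub_nonneg.2 h.1) hu0.le)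
        (by field_simp; linarith)
      simp only [smul_eq_mul] at hcv
      have h2 : (b - X ω) / u * Real.exp a + (X ω - a) / u * Real.exp b
          = c₁ * X ω + c₂ := by
        rw [hc₁, hc₂]; field_simp; ring
      calc Real.exp (X ω) = Real.exp ((b - X ω) / u * a + (X ω - a) / u * b) := by rw [← h1]
        _ ≤ (b - X ω) / u * Real.exp a + (X ω - a) / u * Real.exp b := hcv
        _ = c₁ * X ω + c₂ := h2
    have step1 : ∫ ω, Real.exp (X ω) ∂ν ≤ c₂ := by
      calc ∫ ω, Real.exp (X ω) ∂ν ≤ ∫ ω, (c₁ * X ω + c₂) ∂ν :=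
            integral_mono_ae hint ((hX.const_mul c₁).add (integrable_const c₂)) key
        _ = c₂ := by
            rw [integral_add (hX.const_mul c₁) (integrable_const c₂),
              integral_const_mul, h0, integral_const]
            simp
    have step2 : c₂ ≤ Real.exp ((b - a) ^ 2 / 8) := by
      have hc := hoeffding_calc hp0 hp1 hu0.le
      have lhs_eq : c₂ = Real.exp (-(p*u)) * (1 - p + p * Real.exp u) := by
        have hea : Real.exp a = Real.exp (-(p*u)) := by
          congr 1; rw [hp, neg_div, neg_mul, neg_neg, div_mul_cancel₀ _ hu0.ne']
        have heb : Real.exp b = Real.exp (-(p*u)) * Real.exp u := by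
          rw [← Real.exp_add]; congr 1
          have hpu : p * u = -a := (by rw [hp]; exact div_mul_cancel₀ _ hu0.ne')
          linarith
        rw [hc₂, hea, heb, hp]
        field_simp
        ring
      have rhs_eq : Real.exp ((b-a)^2/8) = Real.exp (-(p*u)) * Real.exp (p * u + u^2/8) := by
        rw [← Real.exp_add]; congr 1; rw [← hu]; ring
      rw [lhs_eq, rhs_eq]
      exact mul_le_mul_of_nonneg_left hc (Real.exp_pos _).le
    linarith
section Atoms
variable {Ω : Type*}

lemma mem_condAtom (m' : MeasurableSpace Ω) (ω : Ω) : ω ∈ condAtom m' ω :=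
  fun s hs => hs.2

lemma condAtom_subset {m' : MeasurableSpace Ω} {ω : Ω} {s : Set Ω}
    (hs : MeasurableSet[m'] s) (hω : ω ∈ s) : condAtom m' ω ⊆ s :=
  Set.sInter_subset_of_mem ⟨hs, hω⟩

variable [Fintype Ω]

lemma measurableSet_condAtom (m' : MeasurableSpace Ω) (ω : Ω) :
    MeasurableSet[m'] (condAtom m' ω) :=
  MeasurableSet.sInter (Set.to_countable _) fun _ hs => hs.1

lemma condAtom_eq {m' : MeasurableSpace Ω} {ω ω' : Ω} (h : ω' ∈ condAtom m' ω) :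
    condAtom m' ω' = condAtom m' ω := by
  have key : ∀ s : Set Ω, MeasurableSet[m'] s → ω' ∈ s → ω ∈ s := by
    intro s hs hω'
    by_contra hω
    exact (condAtom_subset hs.compl hω h) hω'
  apply Set.Subset.antisymm
  · exact condAtom_subset (measurableSet_condAtom m' ω) h
  · intro x hx
    intro s hs
    exact condAtom_subset hs.1 (key s hs.1 hs.2) hx

lemma condAtom_mono {m₁ m₂ : MeasurableSpace Ω} (h : m₁ ≤ m₂) (ω : Ω) :
    condAtom m₂ ω ⊆ condAtom m₁ ω := by
  intro x hx s hs
  exact condAtom_subset (h s hs.1) hs.2 hx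

lemma eq_on_condAtom {m' : MeasurableSpace Ω} {g : Ω → ℝ}
    (hg : Measurable[m'] g) {ω ω' : Ω} (h : ω' ∈ condAtom m' ω) : g ω' = g ω :=
  condAtom_subset (hg (MeasurableSet.singleton (g ω))) rfl h

lemma stronglyMeasurable_of_constant_on_atoms {m' : MeasurableSpace Ω} {g : Ω → ℝ}
    (h : ∀ ω ω', ω' ∈ condAtom m' ω → g ω' = g ω) : StronglyMeasurable[m'] g := by
  apply Measurable.stronglyMeasurable
  intro s _
  have : g ⁻¹' s = ⋃ ω ∈ {ω | g ω ∈ s}, condAtom m' ω := by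
    ext x
    constructor
    · intro hx
      exact Set.mem_biUnion hx (mem_condAtom m' x)
    · rintro hx
      simp only [Set.mem_iUnion] at hx
      obtain ⟨ω, hω, hmem⟩ := hx
      simpa [h ω x hmem] using hω
  rw [this]
  exact MeasurableSet.biUnion (Set.to_countable _) fun ω _ => measurableSet_condAtom m' ω

lemma condRange_congr {m' mΩ : MeasurableSpace Ω} (μ : MeasureTheory.Measure Ω)
    (f : Ω → ℝ) {ω ω' : Ω} (h : ω' ∈ condAtom m' ω) :
    condRange μ m' f ω' = condRange μ m' f ω := by
  unfold condRange
  rw [condAtom_eq h]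

lemma stronglyMeasurable_condRange {m' mΩ : MeasurableSpace Ω} (μ : MeasureTheory.Measure Ω)
    (f : Ω → ℝ) : StronglyMeasurable[m'] (condRange μ m' f) :=
  stronglyMeasurable_of_constant_on_atoms fun _ ω' h => condRange_congr μ f h

lemma null_of_forall_singleton {mΩ : MeasurableSpace Ω} {μ : MeasureTheory.Measure Ω}
    {A : Set Ω} (h : ∀ ω ∈ A, μ {ω} = 0) : μ A = 0 := by
  have : A = ⋃ ω ∈ A, ({ω} : Set Ω) := by simp
  rw [this]
  exact (MeasureTheory.measure_biUnion_null_iff (Set.to_countable A)).2 h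

lemma integrable_fintype {mΩ : MeasurableSpace Ω} (μ : MeasureTheory.Measure Ω)
    [MeasureTheory.IsFiniteMeasure μ] {f : Ω → ℝ}
    (hf : MeasureTheory.AEStronglyMeasurable f μ) : MeasureTheory.Integrable f μ := by
  obtain ⟨M, hM⟩ := (Finset.univ.image fun ω => ‖f ω‖).exists_le
  refine MeasureTheory.Integrable.mono' (MeasureTheory.integrable_const M) hf ?_
  exact MeasureTheory.ae_of_all μ fun ω => hM _ (Finset.mem_image_of_mem _ (Finset.mem_univ ω))

end Atoms

set_option maxHeartbeats 2000000 in
theorem mcdiarmid_mgf_bound {Ω : Type*} [Fintype Ω] {mΩ : MeasurableSpace Ω}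
    (μ : Measure Ω) [IsProbabilityMeasure μ]
    (n : ℕ) (F : ℕ → MeasurableSpace Ω) (Y : ℕ → Ω → ℝ)
    -- `F 0 ⊆ F 1 ⊆ ⋯ ⊆ F n` is a filter of σ-subfields of `mΩ` with `F 0 = {∅, Ω}`
    (hFmono : Monotone F) (hFle : ∀ i, F i ≤ mΩ) (hF0 : F 0 = ⊥)
    -- `Y 0, …, Y n` is a martingale with respect to `F`
    (hadapted : ∀ i, i ≤ n → StronglyMeasurable[F i] (Y i))
    (hmart : ∀ j, 1 ≤ j → j ≤ n → μ[Y j | F (j - 1)] =ᵐ[μ] Y (j - 1))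
    (r : ℝ)
    (hran : ∀ᵐ ω ∂μ, ∑ j ∈ Finset.Icc 1 n, (condRange μ (F (j - 1)) (Y j) ω) ^ 2 ≤ r ^ 2) :
    ∃ K : ℝ, 0 ≤ K ∧ K ≤ r ^ 2 / 8 ∧
      ∫ ω, Real.exp (Y n ω) ∂μ = Real.exp ((∫ ω, Y 0 ω ∂μ) + K) := by
  classical
  have hΩ : Nonempty Ω := by
    by_contra h
    rw [not_nonempty_iff] at h
    have h1 : μ Set.univ = 1 := measure_univ
    rw [Set.univ_eq_empty_iff.2 h, measure_empty] at h1
    exact zero_ne_one h1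
  -- Y 0 is constant
  set c := Y 0 (Classical.arbitrary Ω) with hc
  have hY0 : ∀ ω, Y 0 ω = c := by
    intro ω
    have hmeas : Measurable[⊥] (Y 0) := by
      rw [← hF0]; exact (hadapted 0 n.zero_le).measurable
    have hs : MeasurableSet[⊥] (Y 0 ⁻¹' {c}) := hmeas (MeasurableSet.singleton c)
    have harb : Classical.arbitrary Ω ∈ Y 0 ⁻¹' {c} := rfl
    rcases MeasurableSpace.measurableSet_bot_iff.1 hs with h | h
    · rw [h] at harb
      exact absurd harb (Set.notMem_empty _)
    · have : ω ∈ Y 0 ⁻¹' {c} := by rw [h]; trivial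
      exact this
  have hIY0 : ∫ ω, Y 0 ω ∂μ = c := by
    have : ∫ ω, Y 0 ω ∂μ = ∫ _, c ∂μ := integral_congr_ae (ae_of_all μ hY0)
    rw [this, integral_const]; simp
  -- integrability of everything on a finite space
  have hYsm : ∀ j, j ≤ n → StronglyMeasurable (Y j) :=
    fun j hj => (hadapted j hj).mono (hFle j)
  have hYint : ∀ j, j ≤ n → Integrable (Y j) μ :=
    fun j hj => integrable_fintype μ (hYsm j hj).aestronglyMeasurable
  -- the partial sums of squared conditional ranges
  set S : ℕ → Ω → ℝ :=
    fun k ω => ∑ j ∈ Finset.Icc 1 k, (condRange μ (F (j - 1)) (Y j) ω) ^ 2 with hS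
  have hSsm : ∀ k, StronglyMeasurable (S k) := by
    intro k
    apply Finset.stronglyMeasurable_fun_sum
    intro j _
    exact ((stronglyMeasurable_condRange μ (Y j)).mono (hFle (j-1))).pow 2
  have hEsm : ∀ k, k ≤ n → StronglyMeasurable (fun ω => Real.exp (Y k ω - S k ω / 8)) := by
    intro k hk
    have h8 : StronglyMeasurable fun ω => S k ω / 8 := by
      simp only [div_eq_mul_inv]
      exact (hSsm k).mul_const _
    exact Real.continuous_exp.comp_stronglyMeasurable ((hYsm k hk).sub h8)
  have hEint : ∀ k, k ≤ n → Integrable (fun ω => Real.exp (Y k ω - S k ω / 8)) μ :=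
    fun k hk => integrable_fintype μ (hEsm k hk).aestronglyMeasurable
  -- the per-atom inequality
  have hatom : ∀ k, k + 1 ≤ n → ∀ ω₀ : Ω,
      ∫ ω in condAtom (F k) ω₀, Real.exp (Y (k+1) ω - S (k+1) ω / 8) ∂μ ≤
      ∫ ω in condAtom (F k) ω₀, Real.exp (Y k ω - S k ω / 8) ∂μ := by
    intro k hk1 ω₀
    have hk : k ≤ n := le_of_lt hk1
    set A := condAtom (F k) ω₀ with hA
    have hAm : MeasurableSet[F k] A := measurableSet_condAtom (F k) ω₀
    have hAmΩ : MeasurableSet A := hFle k A hAm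
    rcases eq_or_ne (μ A) 0 with hA0 | hA0
    · rw [Measure.restrict_eq_zero.2 hA0]
      simp
    · -- main case
      set yk := Y k ω₀ with hyk
      set s0 := S k ω₀ with hs0
      set R := condRange μ (F k) (Y (k+1)) ω₀ with hRdef
      set b := sSup {y | ∃ ω' ∈ A, μ {ω'} ≠ 0 ∧ Y (k+1) ω' = y} with hb
      set a := -sSup {y | ∃ ω' ∈ A, μ {ω'} ≠ 0 ∧ -Y (k+1) ω' = y} with ha
      have hR : R = b - a := by
        rw [hRdef, hb, ha]
        show condRange μ (F k) (Y (k+1)) ω₀ = _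
        unfold condRange
        ring
      -- existence of a positive-measure point in A
      have hex : ∃ ω' ∈ A, μ {ω'} ≠ 0 := by
        by_contra h
        push_neg at h
        exact hA0 (null_of_forall_singleton h)
      -- bounds on Y (k+1) at positive-measure points of A
      have hfin1 : ({y | ∃ ω' ∈ A, μ {ω'} ≠ 0 ∧ Y (k+1) ω' = y}).Finite := by
        have : {y | ∃ ω' ∈ A, μ {ω'} ≠ 0 ∧ Y (k+1) ω' = y}
            = Y (k+1) '' {ω' | ω' ∈ A ∧ μ {ω'} ≠ 0} := by
          ext y; constructor
          · rintro ⟨ω', h1, h2, h3⟩; exact ⟨ω', ⟨h1, h2⟩, h3⟩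
          · rintro ⟨ω', ⟨h1, h2⟩, h3⟩; exact ⟨ω', h1, h2, h3⟩
        rw [this]
        exact Set.Finite.image _ (Set.toFinite _)
      have hfin2 : ({y | ∃ ω' ∈ A, μ {ω'} ≠ 0 ∧ -Y (k+1) ω' = y}).Finite := by
        have : {y | ∃ ω' ∈ A, μ {ω'} ≠ 0 ∧ -Y (k+1) ω' = y}
            = (fun ω' => -Y (k+1) ω') '' {ω' | ω' ∈ A ∧ μ {ω'} ≠ 0} := by
          ext y; constructor
          · rintro ⟨ω', h1, h2, h3⟩; exact ⟨ω', ⟨h1, h2⟩, h3⟩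
          · rintro ⟨ω', ⟨h1, h2⟩, h3⟩; exact ⟨ω', h1, h2, h3⟩
        rw [this]
        exact Set.Finite.image _ (Set.toFinite _)
      have hbound : ∀ ω' ∈ A, μ {ω'} ≠ 0 → Y (k+1) ω' ∈ Set.Icc a b := by
        intro ω' h1 h2
        constructor
        · have : -Y (k+1) ω' ≤ sSup {y | ∃ ω' ∈ A, μ {ω'} ≠ 0 ∧ -Y (k+1) ω' = y} :=
            le_csSup hfin2.bddAbove ⟨ω', h1, h2, rfl⟩
          rw [ha]; linarith
        · exact le_csSup hfin1.bddAbove ⟨ω', h1, h2, rfl⟩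
      -- constancy on A
      have hconstYk : ∀ ω ∈ A, Y k ω = yk :=
        fun ω h => eq_on_condAtom (hadapted k hk).measurable h
      have hconstS : ∀ m, m ≤ k + 1 → ∀ ω ∈ A, S m ω = S m ω₀ := by
        intro m hm ω h
        simp only [hS]
        apply Finset.sum_congr rfl
        intro j hj
        simp only [Finset.mem_Icc] at hj
        congr 1
        apply condRange_congr
        refine condAtom_mono (hFmono (show j - 1 ≤ k by omega)) ω₀ h
      have hSsucc : ∀ ω ∈ A, S (k+1) ω = s0 + R ^ 2 := by
        intro ω h
        rw [hconstS (k+1) le_rfl ω h]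
        have hstep : S (k+1) ω₀ = S k ω₀ + (condRange μ (F ((k+1) - 1)) (Y (k+1)) ω₀) ^ 2 := by
          simp only [hS]
          exact Finset.sum_Icc_succ_top (Nat.succ_le_succ k.zero_le) _
        rw [hstep]
        simp only [Nat.add_sub_cancel]
        rfl
      -- the mean of Y (k+1) over A
      have hmean : ∫ ω in A, Y (k+1) ω ∂μ = yk * (μ A).toReal := by
        have e1 : ∫ ω in A, (μ[Y (k+1) | F k]) ω ∂μ = ∫ ω in A, Y (k+1) ω ∂μ :=
          setIntegral_condExp (hFle k) (hYint (k+1) hk1) hAm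
        have e2 : ∫ ω in A, (μ[Y (k+1) | F k]) ω ∂μ = ∫ ω in A, Y k ω ∂μ := by
          apply setIntegral_congr_ae hAmΩ
          have := hmart (k+1) (Nat.succ_le_succ k.zero_le) hk1
          simp only [Nat.add_sub_cancel] at this
          filter_upwards [this] with ω hω _ using hω
        have e3 : ∫ ω in A, Y k ω ∂μ = yk * (μ A).toReal := by
          rw [setIntegral_congr_fun hAmΩ (fun ω h => hconstYk ω h), setIntegral_const]
          rw [smul_eq_mul, measureReal_def]; ring
        rw [← e1, e2, e3]
      -- set up the conditional probability measure and apply Hoeffding's lemma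
      have hcond : IsProbabilityMeasure (ProbabilityTheory.cond μ A) :=
        ProbabilityTheory.cond_isProbabilityMeasure hA0
      have hcondint : ∀ g : Ω → ℝ, StronglyMeasurable g → Integrable g (ProbabilityTheory.cond μ A) := by
        intro g hg
        haveI := hcond
        exact integrable_fintype _ hg.aestronglyMeasurable
      have hcondI : ∀ g : Ω → ℝ,
          ∫ ω, g ω ∂(ProbabilityTheory.cond μ A) = (μ A).toReal⁻¹ * ∫ ω in A, g ω ∂μ := by
        intro g
        unfold ProbabilityTheory.cond
        rw [integral_smul_measure, ENNReal.toReal_inv, smul_eq_mul]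
      have hmuA : (0:ℝ) < (μ A).toReal := ENNReal.toReal_pos hA0 (measure_ne_top μ A)
      set X : Ω → ℝ := fun ω => Y (k+1) ω - yk with hX
      have hXae : ∀ᵐ ω ∂(ProbabilityTheory.cond μ A), X ω ∈ Set.Icc (a - yk) (b - yk) := by
        unfold ProbabilityTheory.cond
        apply Measure.ae_smul_measure
        rw [ae_iff]
        rw [Measure.restrict_apply' hAmΩ]
        apply null_of_forall_singleton
        intro ω hω
        simp only [Set.mem_inter_iff, Set.mem_setOf_eq] at hω
        by_contra hne
        apply hω.1
        have := hbound ω hω.2 hne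
        simp only [hX, Set.mem_Icc] at *
        constructor <;> linarith [this.1, this.2]
      have hX0 : ∫ ω, X ω ∂(ProbabilityTheory.cond μ A) = 0 := by
        rw [hcondI]
        have : ∫ ω in A, X ω ∂μ = 0 := by
          rw [hX]
          rw [integral_sub ((hYint (k+1) hk1).integrableOn) (integrableOn_const ?_)]
          · rw [hmean, setIntegral_const, smul_eq_mul, measureReal_def]; ring
          · exact (measure_lt_top μ A).ne
        rw [this, mul_zero]
      have hhoef := hoeffding_lemma (ProbabilityTheory.cond μ A)
        (hcondint X ((hYsm (k+1) hk1).sub stronglyMeasurable_const))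
        (hcondint _ (Real.continuous_exp.comp_stronglyMeasurable
          ((hYsm (k+1) hk1).sub stronglyMeasurable_const)))
        hXae hX0
      have hwidth : (b - yk - (a - yk)) ^ 2 / 8 = R ^ 2 / 8 := by rw [hR]; ring
      rw [hwidth, hcondI] at hhoef
      -- convert back to set integrals
      have hkey : ∫ ω in A, Real.exp (X ω) ∂μ ≤ (μ A).toReal * Real.exp (R ^ 2 / 8) := by
        rwa [inv_mul_le_iff₀ hmuA] at hhoef
      -- compute left side
      have hLHS : ∫ ω in A, Real.exp (Y (k+1) ω - S (k+1) ω / 8) ∂μ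
          = Real.exp (yk - (s0 + R^2) / 8) * ∫ ω in A, Real.exp (X ω) ∂μ := by
        rw [← integral_const_mul]
        apply setIntegral_congr_fun hAmΩ
        intro ω h
        show Real.exp (Y (k+1) ω - S (k+1) ω / 8)
            = Real.exp (yk - (s0 + R^2) / 8) * Real.exp (X ω)
        rw [hSsucc ω h, ← Real.exp_add, Real.exp_eq_exp]
        show Y (k+1) ω - (s0 + R^2) / 8 = yk - (s0 + R^2)/8 + (Y (k+1) ω - yk)
        ring
      have hRHS : ∫ ω in A, Real.exp (Y k ω - S k ω / 8) ∂μ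
          = (μ A).toReal * Real.exp (yk - s0 / 8) := by
        have : ∀ ω ∈ A, Real.exp (Y k ω - S k ω / 8) = Real.exp (yk - s0 / 8) := by
          intro ω h
          rw [hconstYk ω h, hconstS k (Nat.le_succ k) ω h, hs0]
        rw [setIntegral_congr_fun hAmΩ this, setIntegral_const, smul_eq_mul, measureReal_def]
      rw [hLHS, hRHS]
      calc Real.exp (yk - (s0 + R^2) / 8) * ∫ ω in A, Real.exp (X ω) ∂μ
          ≤ Real.exp (yk - (s0 + R^2) / 8) * ((μ A).toReal * Real.exp (R ^ 2 / 8)) :=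
            mul_le_mul_of_nonneg_left hkey (Real.exp_pos _).le
        _ = (μ A).toReal * Real.exp (yk - s0 / 8) := by
            rw [mul_left_comm, ← Real.exp_add]
            congr 1
            rw [Real.exp_eq_exp]
            ring
  -- the main induction
  have hkeyind : ∀ k, k ≤ n → ∫ ω, Real.exp (Y k ω - S k ω / 8) ∂μ ≤ Real.exp c := by
    intro k
    induction k with
    | zero =>
      intro _
      have : ∀ ω, Real.exp (Y 0 ω - S 0 ω / 8) = Real.exp c := by
        intro ω
        simp only [hS]
        simp [hY0 ω]
      rw [integral_congr_ae (ae_of_all μ this), integral_const]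
      simp
    | succ k IH =>
      intro hk1
      have hk : k ≤ n := le_of_lt hk1
      -- decompose into atoms of F k
      set 𝒜 : Finset (Set Ω) := Finset.univ.image (condAtom (F k)) with h𝒜
      have hmemA : ∀ A ∈ 𝒜, ∃ ω₀, condAtom (F k) ω₀ = A := by
        intro A hA
        obtain ⟨ω₀, _, h⟩ := Finset.mem_image.1 hA
        exact ⟨ω₀, h⟩
      have hmeasA : ∀ A ∈ 𝒜, MeasurableSet A := by
        intro A hA
        obtain ⟨ω₀, h⟩ := hmemA A hA
        exact h ▸ hFle k _ (measurableSet_condAtom (F k) ω₀)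
      have hdisj : Set.Pairwise ↑𝒜 (Function.onFun Disjoint (id : Set Ω → Set Ω)) := by
        intro A hA B hB hAB
        obtain ⟨ω₁, h1⟩ := hmemA A (Finset.mem_coe.1 hA)
        obtain ⟨ω₂, h2⟩ := hmemA B (Finset.mem_coe.1 hB)
        show Disjoint A B
        rw [Set.disjoint_left]
        intro x hxA hxB
        apply hAB
        rw [← h1, ← h2, ← condAtom_eq (h1 ▸ hxA : x ∈ condAtom (F k) ω₁),
          ← condAtom_eq (h2 ▸ hxB : x ∈ condAtom (F k) ω₂)]
      have hunion : ⋃ A ∈ 𝒜, A = Set.univ := by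
        ext x
        simp only [Set.mem_iUnion, id, Set.mem_univ, iff_true]
        exact ⟨condAtom (F k) x, Finset.mem_image_of_mem _ (Finset.mem_univ x),
          mem_condAtom (F k) x⟩
      have hdecomp : ∀ f : Ω → ℝ, Integrable f μ →
          ∫ ω, f ω ∂μ = ∑ A ∈ 𝒜, ∫ ω in A, f ω ∂μ := by
        intro f hf
        rw [← setIntegral_univ (f := f) (μ := μ), ← hunion,
          integral_biUnion_finset 𝒜 hmeasA hdisj (fun A _ => hf.integrableOn)]
      rw [hdecomp _ (hEint (k+1) hk1)]
      calc ∑ A ∈ 𝒜, ∫ ω in A, Real.exp (Y (k+1) ω - S (k+1) ω / 8) ∂μ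
          ≤ ∑ A ∈ 𝒜, ∫ ω in A, Real.exp (Y k ω - S k ω / 8) ∂μ := by
            apply Finset.sum_le_sum
            intro A hA
            obtain ⟨ω₀, h⟩ := hmemA A hA
            rw [← h]
            exact hatom k hk1 ω₀
        _ = ∫ ω, Real.exp (Y k ω - S k ω / 8) ∂μ := (hdecomp _ (hEint k hk)).symm
        _ ≤ Real.exp c := IH hk
  -- conclude
  set I := ∫ ω, Real.exp (Y n ω) ∂μ with hI
  have hexpint : Integrable (fun ω => Real.exp (Y n ω)) μ :=
    integrable_fintype μ
      (Real.continuous_exp.comp_stronglyMeasurable (hYsm n le_rfl)).aestronglyMeasurable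
  have hupper : I ≤ Real.exp (c + r ^ 2 / 8) := by
    have step : I ≤ (∫ ω, Real.exp (Y n ω - S n ω / 8) ∂μ) * Real.exp (r ^ 2 / 8) := by
      rw [← integral_mul_const]
      apply integral_mono_ae hexpint
        (integrable_fintype μ (((hEsm n le_rfl).mul_const _).aestronglyMeasurable))
      filter_upwards [hran] with ω hω
      rw [← Real.exp_add]
      apply Real.exp_le_exp.2
      have : S n ω ≤ r ^ 2 := hω
      linarith
    calc I ≤ (∫ ω, Real.exp (Y n ω - S n ω / 8) ∂μ) * Real.exp (r ^ 2 / 8) := step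
      _ ≤ Real.exp c * Real.exp (r ^ 2 / 8) :=
          mul_le_mul_of_nonneg_right (hkeyind n le_rfl) (Real.exp_pos _).le
      _ = Real.exp (c + r ^ 2 / 8) := (Real.exp_add _ _).symm
  have hEYn : ∫ ω, Y n ω ∂μ = c := by
    have : ∀ j, j ≤ n → ∫ ω, Y j ω ∂μ = c := by
      intro j
      induction j with
      | zero => intro _; exact hIY0
      | succ j IH =>
        intro hj1
        have e1 : ∫ ω, (μ[Y (j+1) | F j]) ω ∂μ = ∫ ω, Y (j+1) ω ∂μ :=
          integral_condExp (hFle j)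
        have e2 : ∫ ω, (μ[Y (j+1) | F j]) ω ∂μ = ∫ ω, Y j ω ∂μ := by
          apply integral_congr_ae
          have := hmart (j+1) (Nat.succ_le_succ j.zero_le) hj1
          simpa only [Nat.add_sub_cancel] using this
        rw [← e1, e2, IH (le_of_lt hj1)]
    exact this n le_rfl
  have hlower : Real.exp c ≤ I := by
    have step : ∀ ω, Real.exp c * (Y n ω - c + 1) ≤ Real.exp (Y n ω) := by
      intro ω
      have h1 : Y n ω - c + 1 ≤ Real.exp (Y n ω - c) := Real.add_one_le_exp _
      calc Real.exp c * (Y n ω - c + 1) ≤ Real.exp c * Real.exp (Y n ω - c) :=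
            mul_le_mul_of_nonneg_left h1 (Real.exp_pos _).le
        _ = Real.exp (Y n ω) := by rw [← Real.exp_add]; ring_nf
    have hA1 : Integrable (fun ω => Y n ω - c) μ := (hYint n le_rfl).sub (integrable_const c)
    have hintlin : Integrable (fun ω => Real.exp c * (Y n ω - c + 1)) μ :=
      (hA1.add (integrable_const 1)).const_mul _
    have := integral_mono_ae hintlin hexpint (ae_of_all μ step)
    rw [integral_const_mul, integral_add hA1 (integrable_const 1),
      integral_sub (hYint n le_rfl) (integrable_const c),
      hEYn, integral_const, integral_const] at this
    simpa using this
  have hIpos : 0 < I := lt_of_lt_of_le (Real.exp_pos c) hlower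
  refine ⟨Real.log I - c, ?_, ?_, ?_⟩
  · have : Real.log (Real.exp c) ≤ Real.log I :=
      (Real.log_le_log_iff (Real.exp_pos c) hIpos).2 hlower
    rw [Real.log_exp] at this
    linarith
  · have : Real.log I ≤ Real.log (Real.exp (c + r ^ 2 / 8)) :=
      (Real.log_le_log_iff hIpos (Real.exp_pos _)).2 hupper
    rw [Real.log_exp] at this
    linarith
  · rw [hIY0]
    rw [show c + (Real.log I - c) = Real.log I by ring, Real.exp_log hIpos]
end

section
/- Let 0 ≤ r ≤ N be integers and let h be a real-valued function on the r-element subsets of {1,…,N}. Suppose there exists α ≥ 0 such that |h(A) − h(A′)| ≤ α whenever A and A′ are r-subsets with |A ∩ A′| = r − 1. Let C be a uniformly random r-subset of {1,…,N}. Then E e^{h(C)} = exp( E h(C) + K ) for some real constant K with 0 ≤ K ≤ (1/8)·min{r, N−r}·α². -/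
open Finset Real

-- Hoeffding's lemma for centered bounded values at t = 1
lemma hoeff_aux {ι : Type*} (s : Finset ι) (hs : s.Nonempty) (b : ι → ℝ) (α : ℝ)
    (hb : ∀ i ∈ s, (b i)^2 ≤ α^2/4) :
    (∑ i ∈ s, Real.exp (b i)) ≤ s.card * Real.exp ((∑ i ∈ s, b i)/s.card + α^2/8) := by
  set Z : ℝ → ℝ := fun t => ∑ i ∈ s, Real.exp (t * b i) with hZ
  set Z' : ℝ → ℝ := fun t => ∑ i ∈ s, b i * Real.exp (t * b i) with hZ'
  set Z'' : ℝ → ℝ := fun t => ∑ i ∈ s, (b i)^2 * Real.exp (t * b i) with hZ''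
  have hZpos : ∀ t, 0 < Z t := fun t =>
    Finset.sum_pos (fun i _ => Real.exp_pos _) hs
  have hdZ : ∀ t, HasDerivAt Z (Z' t) t := by
    intro t
    apply HasDerivAt.fun_sum
    intro i _
    simpa [mul_comm, Function.comp_def] using (Real.hasDerivAt_exp (t * b i)).comp t
      ((hasDerivAt_id t).mul_const (b i))
  have hdZ' : ∀ t, HasDerivAt Z' (Z'' t) t := by
    intro t
    apply HasDerivAt.fun_sum
    intro i _
    have := ((Real.hasDerivAt_exp (t * b i)).comp t
      ((hasDerivAt_id t).mul_const (b i))).const_mul (b i)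
    simpa [pow_two, mul_comm, mul_assoc, mul_left_comm, Function.comp_def] using this
  -- g t = Z' t / Z t - t * α²/4 ; g' ≤ 0
  set g : ℝ → ℝ := fun t => Z' t / Z t - t * (α^2/4) with hg
  have hdg : ∀ t, HasDerivAt g (Z'' t / Z t - (Z' t / Z t)^2 - α^2/4) t := by
    intro t
    have h1 : HasDerivAt (fun t => Z' t / Z t)
        ((Z'' t * Z t - Z' t * Z' t) / (Z t)^2) t :=
      (hdZ' t).div (hdZ t) (hZpos t).ne'
    have h2 : (Z'' t * Z t - Z' t * Z' t) / (Z t)^2 = Z'' t / Z t - (Z' t / Z t)^2 := by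
      field_simp
    rw [h2] at h1
    exact (h1.sub ((hasDerivAt_id t).mul_const (α^2/4))).congr_deriv (by ring)
  have hg' : ∀ t : ℝ, Z'' t / Z t - (Z' t / Z t)^2 - α^2/4 ≤ 0 := by
    intro t
    have hZ''le : Z'' t ≤ (α^2/4) * Z t := by
      rw [hZ'', hZ, Finset.mul_sum]
      apply Finset.sum_le_sum
      intro i hi
      exact mul_le_mul_of_nonneg_right (hb i hi) (Real.exp_pos _).le
    have : Z'' t / Z t ≤ α^2/4 := by
      rw [div_le_iff₀ (hZpos t)]
      linarith [hZ''le]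
    nlinarith [sq_nonneg (Z' t / Z t)]
  have hganti : AntitoneOn g (Set.Icc (0:ℝ) 1) := by
    apply antitoneOn_of_deriv_nonpos (convex_Icc 0 1)
    · exact (Differentiable.continuous (fun t : ℝ => (hdg t).differentiableAt)).continuousOn
    · intro x _
      exact ((hdg x).differentiableAt).differentiableWithinAt
    · intro x _
      rw [(hdg x).deriv]
      exact hg' x
  -- hence g t ≤ g 0 on [0,1]
  have hgle : ∀ t ∈ Set.Icc (0:ℝ) 1, g t ≤ g 0 :=
    fun t ht => hganti (Set.mem_Icc.mpr ⟨le_refl 0, zero_le_one⟩) ht ht.1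
  -- F t = log (Z t) - t * (Z' 0 / Z 0) - t^2 * (α^2/8)
  set F : ℝ → ℝ := fun t => Real.log (Z t) - t * (Z' 0 / Z 0) - t^2 * (α^2/8) with hF
  have hdF : ∀ t, HasDerivAt F (g t - g 0) t := by
    intro t
    have h1 : HasDerivAt (fun t => Real.log (Z t)) (Z' t / Z t) t := by
      simpa [div_eq_mul_inv, mul_comm] using (hdZ t).log (hZpos t).ne'
    have h2 := (h1.sub ((hasDerivAt_id t).mul_const (Z' 0 / Z 0))).sub
      (((hasDerivAt_pow 2 t)).mul_const (α^2/8))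
    refine h2.congr_deriv ?_
    simp [hg]
    ring
  have hFanti : AntitoneOn F (Set.Icc (0:ℝ) 1) := by
    apply antitoneOn_of_deriv_nonpos (convex_Icc 0 1)
    · exact (Differentiable.continuous (fun t : ℝ => (hdF t).differentiableAt)).continuousOn
    · intro x _
      exact ((hdF x).differentiableAt).differentiableWithinAt
    · intro x hx
      rw [(hdF x).deriv]
      have hx' : x ∈ Set.Icc (0:ℝ) 1 := interior_subset hx
      linarith [hgle x hx']
  have hF10 : F 1 ≤ F 0 := hFanti (Set.mem_Icc.mpr ⟨le_refl 0, zero_le_one⟩)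
    (Set.mem_Icc.mpr ⟨zero_le_one, le_refl 1⟩) zero_le_one
  have hZ0 : Z 0 = s.card := by simp [hZ]
  have hZ'0 : Z' 0 = ∑ i ∈ s, b i := by simp [hZ']
  have hZ1 : Z 1 = ∑ i ∈ s, Real.exp (b i) := by simp [hZ]
  have hF1 : F 1 = Real.log (Z 1) - (∑ i ∈ s, b i) / s.card - α^2/8 := by
    simp [hF, hZ'0, hZ0, div_eq_mul_inv]
  have hF0 : F 0 = Real.log (s.card) := by simp [hF, hZ0]
  have hlog : Real.log (Z 1) ≤ Real.log (s.card) + (∑ i ∈ s, b i) / s.card + α^2/8 := by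
    rw [hF1, hF0] at hF10; linarith
  have hcardpos : (0:ℝ) < s.card := by
    exact_mod_cast Finset.card_pos.mpr hs
  calc (∑ i ∈ s, Real.exp (b i)) = Z 1 := hZ1.symm
    _ = Real.exp (Real.log (Z 1)) := (Real.exp_log (hZpos 1)).symm
    _ ≤ Real.exp (Real.log (s.card) + (∑ i ∈ s, b i) / s.card + α^2/8) :=
        Real.exp_le_exp.mpr hlog
    _ = s.card * Real.exp ((∑ i ∈ s, b i)/s.card + α^2/8) := by
        rw [Real.exp_add, Real.exp_add, Real.exp_add, Real.exp_log hcardpos]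
        ring

lemma hoeffding_discrete {ι : Type*} (s : Finset ι) (hs : s.Nonempty) (a : ι → ℝ) (α : ℝ)
    (hab : ∀ i ∈ s, ∀ j ∈ s, |a i - a j| ≤ α) :
    (∑ i ∈ s, Real.exp (a i)) ≤ s.card * Real.exp ((∑ i ∈ s, a i)/s.card + α^2/8) := by
  obtain ⟨i0, hi0, hmax⟩ := s.exists_max_image a hs
  obtain ⟨i1, hi1, hmin⟩ := s.exists_min_image a hs
  set c : ℝ := (a i1 + a i0)/2 with hc
  have hb : ∀ i ∈ s, (a i - c)^2 ≤ α^2/4 := by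
    intro i hi
    have h1 := hmin i hi
    have h2 := hmax i hi
    have h3 : a i0 - a i1 ≤ α := by
      have := hab i0 hi0 i1 hi1
      rw [abs_le] at this; linarith [this.2]
    nlinarith
  have key := hoeff_aux s hs (fun i => a i - c) α hb
  have hcard : (0:ℝ) < s.card := by exact_mod_cast Finset.card_pos.mpr hs
  have e1 : ∑ i ∈ s, Real.exp (a i - c) = Real.exp (-c) * ∑ i ∈ s, Real.exp (a i) := by
    rw [Finset.mul_sum]
    exact Finset.sum_congr rfl fun i _ => by rw [← Real.exp_add]; ring_nf
  have e2 : ∑ i ∈ s, (a i - c) = (∑ i ∈ s, a i) - s.card * c := by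
    rw [Finset.sum_sub_distrib, Finset.sum_const, nsmul_eq_mul]
  rw [e1, e2] at key
  have e3 : ((∑ i ∈ s, a i) - s.card * c) / s.card = (∑ i ∈ s, a i) / s.card - c := by
    field_simp
  rw [e3] at key
  have := mul_le_mul_of_nonneg_left key (le_of_lt (Real.exp_pos c))
  calc (∑ i ∈ s, Real.exp (a i))
      = Real.exp c * (Real.exp (-c) * ∑ i ∈ s, Real.exp (a i)) := by
        rw [← mul_assoc, ← Real.exp_add]; simp
    _ ≤ Real.exp c * (s.card * Real.exp ((∑ i ∈ s, a i) / s.card - c + α ^ 2 / 8)) := this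
    _ = s.card * Real.exp ((∑ i ∈ s, a i)/s.card + α^2/8) := by
        rw [← mul_assoc, mul_comm (Real.exp c), mul_assoc, ← Real.exp_add]
        ring_nf

lemma sum_insert_eq {N r : ℕ} (f : Finset (Fin N) → ℝ) :
    ∑ B ∈ Finset.powersetCard r (Finset.univ : Finset (Fin N)), ∑ x ∈ Bᶜ, f (insert x B)
    = (r+1) * ∑ A ∈ Finset.powersetCard (r+1) (Finset.univ : Finset (Fin N)), f A := by
  have rhs : (r+1 : ℝ) * ∑ A ∈ Finset.powersetCard (r+1) (Finset.univ : Finset (Fin N)), f A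
      = ∑ A ∈ Finset.powersetCard (r+1) (Finset.univ : Finset (Fin N)), ∑ _x ∈ A, f A := by
    rw [Finset.mul_sum]
    apply Finset.sum_congr rfl
    intro A hA
    rw [Finset.sum_const, nsmul_eq_mul, (Finset.mem_powersetCard.mp hA).2]
    push_cast; ring
  rw [rhs, Finset.sum_sigma', Finset.sum_sigma']
  apply Finset.sum_nbij' (fun p => (⟨insert p.2 p.1, p.2⟩ : Σ _A : Finset (Fin N), Fin N))
    (fun q => (⟨q.1.erase q.2, q.2⟩ : Σ _A : Finset (Fin N), Fin N))
  · intro p hp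
    rw [Finset.mem_sigma] at hp ⊢
    obtain ⟨h1, h2⟩ := hp
    have hcard := (Finset.mem_powersetCard.mp h1).2
    have hx : p.2 ∉ p.1 := by simpa using h2
    constructor
    · exact Finset.mem_powersetCard.mpr ⟨Finset.subset_univ _,
        by rw [Finset.card_insert_of_notMem hx, hcard]⟩
    · exact Finset.mem_insert_self _ _
  · intro q hq
    rw [Finset.mem_sigma] at hq ⊢
    obtain ⟨h1, h2⟩ := hq
    have hcard := (Finset.mem_powersetCard.mp h1).2
    constructor
    · exact Finset.mem_powersetCard.mpr ⟨Finset.subset_univ _,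
        by rw [Finset.card_erase_of_mem h2, hcard]; omega⟩
    · simp
  · intro p hp
    rw [Finset.mem_sigma] at hp
    have hx : p.2 ∉ p.1 := by simpa using hp.2
    simp [Finset.erase_insert hx]
  · intro q hq
    rw [Finset.mem_sigma] at hq
    simp [Finset.insert_erase hq.2]
  · exact fun p _ => rfl

lemma avg_lip {N r : ℕ} (hrN : r < N) (h : Finset (Fin N) → ℝ) (α : ℝ) (hα : 0 ≤ α)
    (hlip : ∀ A A' : Finset (Fin N), A.card = r + 1 → A'.card = r + 1 →
      (A ∩ A').card = r → |h A - h A'| ≤ α)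
    (B B' : Finset (Fin N)) (hB : B.card = r) (hB' : B'.card = r)
    (hI : (B ∩ B').card = r - 1) :
    |(∑ x ∈ Bᶜ, h (insert x B))/((N - r : ℕ) : ℝ)
      - (∑ y ∈ B'ᶜ, h (insert y B'))/((N - r : ℕ) : ℝ)| ≤ α := by
  by_cases hBB : B = B'
  · subst hBB; simpa using hα
  -- extract the two swapped elements
  have hsd : (B \ B').card = 1 := by
    have h1 := Finset.card_inter_add_card_sdiff B B'
    have h2 : (B \ B').Nonempty := by
      rw [Finset.sdiff_nonempty]
      intro hsub
      exact hBB (Finset.eq_of_subset_of_card_le hsub (le_of_eq (hB'.trans hB.symm)))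
    have h3 := Finset.card_pos.mpr h2
    omega
  have hsd' : (B' \ B).card = 1 := by
    have h1 := Finset.card_inter_add_card_sdiff B' B
    have h2 : (B' \ B).Nonempty := by
      rw [Finset.sdiff_nonempty]
      intro hsub
      exact hBB (Finset.eq_of_subset_of_card_le hsub (le_of_eq (hB.trans hB'.symm))).symm
    have h3 := Finset.card_pos.mpr h2
    rw [Finset.inter_comm] at hI
    omega
  obtain ⟨a, ha⟩ := Finset.card_eq_one.mp hsd
  obtain ⟨b, hb⟩ := Finset.card_eq_one.mp hsd'
  have haB : a ∈ B ∧ a ∉ B' := by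
    have : a ∈ B \ B' := ha ▸ Finset.mem_singleton_self a
    exact ⟨(Finset.mem_sdiff.mp this).1, (Finset.mem_sdiff.mp this).2⟩
  have hbB : b ∈ B' ∧ b ∉ B := by
    have : b ∈ B' \ B := hb ▸ Finset.mem_singleton_self b
    exact ⟨(Finset.mem_sdiff.mp this).1, (Finset.mem_sdiff.mp this).2⟩
  have hunion : insert b B = insert a B' := by
    have e1 : insert b B = B ∪ B' := by
      rw [Finset.insert_eq, Finset.union_comm, ← hb, Finset.union_sdiff_self_eq_union]
    have e2 : insert a B' = B' ∪ B := by
      rw [Finset.insert_eq, Finset.union_comm, ← ha, Finset.union_sdiff_self_eq_union]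
    rw [e1, e2, Finset.union_comm]
  have hB'sub : B' ⊆ insert b B := by rw [hunion]; exact Finset.subset_insert _ _
  -- reindex the second sum
  have hre : ∑ y ∈ B'ᶜ, h (insert y B') = ∑ x ∈ Bᶜ, h (insert (Equiv.swap a b x) B') := by
    apply Finset.sum_nbij' (fun y => Equiv.swap a b y) (fun x => Equiv.swap a b x)
    · intro y hy
      rw [Finset.mem_compl] at hy ⊢
      rcases eq_or_ne y a with rfl | hya
      · rw [Equiv.swap_apply_left]; exact hbB.2
      rcases eq_or_ne y b with rfl | hyb
      · exact absurd hbB.1 hy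
      · rw [Equiv.swap_apply_of_ne_of_ne hya hyb]
        intro hyB
        have hmem : y ∈ insert a B' := by
          rw [← hunion]; exact Finset.mem_insert_of_mem hyB
        rcases Finset.mem_insert.mp hmem with h' | h'
        · exact hya h'
        · exact hy h'
    · intro x hx
      rw [Finset.mem_compl] at hx ⊢
      rcases eq_or_ne x b with rfl | hxb
      · rw [Equiv.swap_apply_right]; exact haB.2
      have hxa : x ≠ a := fun h' => hx (h' ▸ haB.1)
      rw [Equiv.swap_apply_of_ne_of_ne hxa hxb]
      intro hxB'
      have : x ∈ insert b B := hB'sub hxB'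
      rcases Finset.mem_insert.mp this with h' | h'
      · exact hxb h'
      · exact hx h'
    · intro y _; simp
    · intro x _; simp
    · intro y _; rw [Equiv.swap_apply_self]
  have hr1 : 1 ≤ r := by
    have h1 := Finset.card_inter_add_card_sdiff B B'
    omega
  have hcompl : (Bᶜ : Finset (Fin N)).card = N - r := by
    rw [Finset.card_compl, Fintype.card_fin, hB]
  have hNr : (0:ℝ) < ((N - r : ℕ) : ℝ) := by
    have : 0 < N - r := by omega
    exact_mod_cast this
  rw [hre, div_sub_div_same, ← Finset.sum_sub_distrib, abs_div, abs_of_pos hNr,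
    div_le_iff₀ hNr]
  calc |∑ x ∈ Bᶜ, (h (insert x B) - h (insert (Equiv.swap a b x) B'))|
      ≤ ∑ x ∈ Bᶜ, |h (insert x B) - h (insert (Equiv.swap a b x) B')| :=
        Finset.abs_sum_le_sum_abs _ _
    _ ≤ ∑ _x ∈ Bᶜ, α := by
        apply Finset.sum_le_sum
        intro x hx
        rw [Finset.mem_compl] at hx
        rcases eq_or_ne x b with rfl | hxb
        · rw [Equiv.swap_apply_right, hunion]
          simpa using hα
        · have hxa : x ≠ a := fun h' => hx (h' ▸ haB.1)
          rw [Equiv.swap_apply_of_ne_of_ne hxa hxb]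
          have hxB' : x ∉ B' := by
            intro hxB'
            rcases Finset.mem_insert.mp (hB'sub hxB') with h' | h'
            · exact hxb h'
            · exact hx h'
          apply hlip
          · rw [Finset.card_insert_of_notMem hx, hB]
          · rw [Finset.card_insert_of_notMem hxB', hB']
          · have hint : insert x B ∩ insert x B' = insert x (B ∩ B') := by
              ext y
              simp only [Finset.mem_inter, Finset.mem_insert]
              tauto
            rw [hint, Finset.card_insert_of_notMem
              (fun h' => hx (Finset.mem_inter.mp h').1), hI]
            omega
    _ = α * ((N - r : ℕ) : ℝ) := by
        rw [Finset.sum_const, hcompl, nsmul_eq_mul, mul_comm]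

lemma main_ind {N : ℕ} (α : ℝ) (hα : 0 ≤ α) :
    ∀ r : ℕ, r ≤ N → ∀ h : Finset (Fin N) → ℝ,
    (∀ A A' : Finset (Fin N), A.card = r → A'.card = r →
      (A ∩ A').card = r - 1 → |h A - h A'| ≤ α) →
    (∑ A ∈ Finset.powersetCard r (Finset.univ : Finset (Fin N)), Real.exp (h A)) ≤
      (N.choose r : ℝ) * Real.exp
        ((∑ A ∈ Finset.powersetCard r (Finset.univ : Finset (Fin N)), h A) / (N.choose r : ℝ)
          + r * (α^2/8)) := by
  intro r
  induction r with
  | zero => intro _ h _; simp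
  | succ r ih =>
    intro hr h hlip
    have hrN : r < N := hr
    have hlip' : ∀ A A' : Finset (Fin N), A.card = r + 1 → A'.card = r + 1 →
        (A ∩ A').card = r → |h A - h A'| ≤ α := by
      intro A A' c c' ci
      exact hlip A A' c c' (by omega)
    set nr : ℝ := ((N - r : ℕ) : ℝ) with hnr
    have hnrpos : (0:ℝ) < nr := by
      have h0 : 0 < N - r := by omega
      rw [hnr]; exact_mod_cast h0
    set H : Finset (Fin N) → ℝ := fun B => (∑ x ∈ Bᶜ, h (insert x B)) / nr with hH
    have HLip : ∀ B B' : Finset (Fin N), B.card = r → B'.card = r →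
        (B ∩ B').card = r - 1 → |H B - H B'| ≤ α := by
      intro B B' hB hB' hI
      exact avg_lip hrN h α hα hlip' B B' hB hB' hI
    have IH := ih (le_of_lt hrN) H HLip
    set c0 : ℝ := (N.choose r : ℝ) with hc0
    set c1 : ℝ := (N.choose (r+1) : ℝ) with hc1
    have hc0pos : (0:ℝ) < c0 := by
      rw [hc0]; exact_mod_cast Nat.choose_pos (le_of_lt hrN)
    have hc1pos : (0:ℝ) < c1 := by
      rw [hc1]; exact_mod_cast Nat.choose_pos hr
    have hkey : c1 * ((r:ℝ) + 1) = c0 * nr := by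
      have := Nat.choose_succ_right_eq N r
      rw [hc1, hc0, hnr]
      exact_mod_cast this
    set S : ℝ := ∑ A ∈ Finset.powersetCard (r+1) (Finset.univ : Finset (Fin N)),
      Real.exp (h A) with hS
    set T : ℝ := ∑ A ∈ Finset.powersetCard (r+1) (Finset.univ : Finset (Fin N)), h A with hT
    -- step 2 : per-B Hoeffding
    have step2 : ∀ B ∈ Finset.powersetCard r (Finset.univ : Finset (Fin N)),
        (∑ x ∈ Bᶜ, Real.exp (h (insert x B))) ≤ nr * Real.exp (H B + α^2/8) := by
      intro B hB
      have hBcard : B.card = r := (Finset.mem_powersetCard.mp hB).2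
      have hcompl : (Bᶜ : Finset (Fin N)).card = N - r := by
        rw [Finset.card_compl, Fintype.card_fin, hBcard]
      have hne : (Bᶜ : Finset (Fin N)).Nonempty := by
        rw [← Finset.card_pos, hcompl]; omega
      have hpair : ∀ x ∈ (Bᶜ : Finset (Fin N)), ∀ y ∈ (Bᶜ : Finset (Fin N)),
          |h (insert x B) - h (insert y B)| ≤ α := by
        intro x hx y hy
        rcases eq_or_ne x y with rfl | hxy
        · simpa using hα
        rw [Finset.mem_compl] at hx hy
        apply hlip'
        · rw [Finset.card_insert_of_notMem hx, hBcard]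
        · rw [Finset.card_insert_of_notMem hy, hBcard]
        · have : insert x B ∩ insert y B = B := by
            ext z
            simp only [Finset.mem_inter, Finset.mem_insert]
            constructor
            · rintro ⟨rfl | hz, h2 | h2⟩
              · exact absurd h2 hxy
              · exact h2
              · exact hz
              · exact hz
            · intro hz; exact ⟨Or.inr hz, Or.inr hz⟩
          rw [this, hBcard]
      have := hoeffding_discrete (Bᶜ) hne (fun x => h (insert x B)) α hpair
      rw [hcompl] at this
      calc (∑ x ∈ Bᶜ, Real.exp (h (insert x B)))
          ≤ ((N - r : ℕ) : ℝ) * Real.exp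
            ((∑ x ∈ Bᶜ, h (insert x B)) / ((N - r : ℕ) : ℝ) + α^2/8) := this
        _ = nr * Real.exp (H B + α^2/8) := by rw [hH, hnr]
    -- chain
    have chain1 : ((r:ℝ) + 1) * S =
        ∑ B ∈ Finset.powersetCard r (Finset.univ : Finset (Fin N)),
          ∑ x ∈ Bᶜ, Real.exp (h (insert x B)) := by
      rw [hS, sum_insert_eq (fun A => Real.exp (h A))]
    have chain2 : ((r:ℝ) + 1) * S ≤
        nr * Real.exp (α^2/8) *
          ∑ B ∈ Finset.powersetCard r (Finset.univ : Finset (Fin N)), Real.exp (H B) := by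
      rw [chain1, Finset.mul_sum]
      apply Finset.sum_le_sum
      intro B hB
      calc (∑ x ∈ Bᶜ, Real.exp (h (insert x B))) ≤ nr * Real.exp (H B + α^2/8) := step2 B hB
        _ = nr * Real.exp (α^2/8) * Real.exp (H B) := by
            rw [Real.exp_add]; ring
    have hsumH : ∑ B ∈ Finset.powersetCard r (Finset.univ : Finset (Fin N)), H B
        = ((r:ℝ) + 1) * T / nr := by
      rw [hH, hT, ← Finset.sum_div, sum_insert_eq h]
    have chain3 : ((r:ℝ) + 1) * S ≤
        nr * Real.exp (α^2/8) * (c0 * Real.exp ((((r:ℝ)+1) * T / nr) / c0 + r * (α^2/8))) := by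
      refine le_trans chain2 ?_
      apply mul_le_mul_of_nonneg_left _ (by positivity)
      rw [← hsumH]
      exact IH
    -- rewrite the RHS
    have hexp : (((r:ℝ)+1) * T / nr) / c0 = T / c1 := by
      have h2 : c1 ≠ 0 := ne_of_gt hc1pos
      have h3 : ((r:ℝ)+1) ≠ 0 := by positivity
      have h4 : nr ≠ 0 := ne_of_gt hnrpos
      have h5 : c0 ≠ 0 := ne_of_gt hc0pos
      rw [div_div, mul_comm nr c0, ← hkey]
      field_simp
    have final : ((r:ℝ) + 1) * S ≤ ((r:ℝ)+1) * (c1 * Real.exp (T / c1 + (↑(r+1)) * (α^2/8))) := by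
      refine le_trans chain3 (le_of_eq ?_)
      rw [hexp]
      have hsplit : ((↑(r+1)):ℝ) * (α^2/8) = (r:ℝ)*(α^2/8) + α^2/8 := by push_cast; ring
      rw [hsplit, Real.exp_add, Real.exp_add, Real.exp_add]
      linear_combination (-(Real.exp (α^2/8) * Real.exp (T/c1) * Real.exp ((r:ℝ)*(α^2/8)))) * hkey
    have := le_of_mul_le_mul_left (by
        calc ((r:ℝ)+1) * S ≤ _ := final) (by positivity : (0:ℝ) < (r:ℝ)+1)
    exact this

lemma compl_bound {N r : ℕ} (hr : r ≤ N) (h : Finset (Fin N) → ℝ) (α : ℝ) (hα : 0 ≤ α)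
    (hlip : ∀ A A' : Finset (Fin N), A.card = r → A'.card = r →
      (A ∩ A').card = r - 1 → |h A - h A'| ≤ α) :
    (∑ A ∈ Finset.powersetCard r (Finset.univ : Finset (Fin N)), Real.exp (h A)) ≤
      (N.choose r : ℝ) * Real.exp
        ((∑ A ∈ Finset.powersetCard r (Finset.univ : Finset (Fin N)), h A) / (N.choose r : ℝ)
          + (N - r : ℕ) * (α^2/8)) := by
  set g : Finset (Fin N) → ℝ := fun A => h Aᶜ with hg
  have hglip : ∀ A A' : Finset (Fin N), A.card = N - r → A'.card = N - r →
      (A ∩ A').card = (N - r) - 1 → |g A - g A'| ≤ α := by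
    intro A A' cA cA' cI
    by_cases hAA : A = A'
    · subst hAA; simpa using hα
    have hcc : ∀ X : Finset (Fin N), X.card = N - r → (Xᶜ).card = r := by
      intro X hX
      rw [Finset.card_compl, Fintype.card_fin, hX]
      omega
    apply hlip _ _ (hcc A cA) (hcc A' cA')
    have hU := Finset.card_union_add_card_inter A A'
    have hss : A ∩ A' ⊂ A := by
      rw [Finset.ssubset_iff_subset_ne]
      refine ⟨Finset.inter_subset_left, ?_⟩
      intro hEq
      exact hAA (Finset.eq_of_subset_of_card_le
        (by rw [← hEq] at *; exact Finset.inter_subset_right)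
        (le_of_eq (cA'.trans cA.symm)))
    have hlt : (A ∩ A').card < A.card := Finset.card_lt_card hss
    have hUle : (A ∪ A').card ≤ N := le_trans (Finset.card_le_card (Finset.subset_univ _))
      (le_of_eq (by rw [Finset.card_univ, Fintype.card_fin]))
    have hcompl : (Aᶜ ∩ A'ᶜ) = (A ∪ A')ᶜ := (Finset.compl_union A A').symm
    rw [hcompl, Finset.card_compl, Fintype.card_fin]
    omega
  have key := main_ind α hα (N - r) (by omega) g hglip
  have eq1 : ∀ f : Finset (Fin N) → ℝ,
      ∑ A ∈ Finset.powersetCard (N - r) (Finset.univ : Finset (Fin N)), f Aᶜ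
      = ∑ A ∈ Finset.powersetCard r (Finset.univ : Finset (Fin N)), f A := by
    intro f
    apply Finset.sum_nbij' (fun A => Aᶜ) (fun A => Aᶜ)
    · intro A hA
      rw [Finset.mem_powersetCard] at hA ⊢
      refine ⟨Finset.subset_univ _, ?_⟩
      rw [Finset.card_compl, Fintype.card_fin, hA.2]
      omega
    · intro A hA
      rw [Finset.mem_powersetCard] at hA ⊢
      refine ⟨Finset.subset_univ _, ?_⟩
      rw [Finset.card_compl, Fintype.card_fin, hA.2]
    · intro A _; simp
    · intro A _; simp
    · intro A _; rfl
  have hchoose : (N.choose (N - r) : ℝ) = (N.choose r : ℝ) := by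
    exact_mod_cast congrArg (Nat.cast (R := ℝ)) (Nat.choose_symm hr)
  rw [hg] at key
  rw [eq1 (fun A => Real.exp (h A)), eq1 h, hchoose] at key
  exact key

theorem subsets_mgf_bound (N r : ℕ) (hr : r ≤ N) (h : Finset (Fin N) → ℝ)
    (α : ℝ) (hα : 0 ≤ α)
    (hlip : ∀ A A' : Finset (Fin N), A.card = r → A'.card = r →
      (A ∩ A').card = r - 1 → |h A - h A'| ≤ α) :
    ∃ K : ℝ, 0 ≤ K ∧ K ≤ (1 / 8) * (min r (N - r) : ℕ) * α ^ 2 ∧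
      (∑ A ∈ Finset.powersetCard r (Finset.univ : Finset (Fin N)), Real.exp (h A)) /
          ((Finset.powersetCard r (Finset.univ : Finset (Fin N))).card : ℝ)
        = Real.exp ((∑ A ∈ Finset.powersetCard r (Finset.univ : Finset (Fin N)), h A) /
            ((Finset.powersetCard r (Finset.univ : Finset (Fin N))).card : ℝ) + K) := by
  classical
  set P := Finset.powersetCard r (Finset.univ : Finset (Fin N)) with hP
  have hcard : (P.card : ℝ) = (N.choose r : ℝ) := by
    rw [hP, Finset.card_powersetCard, Finset.card_univ, Fintype.card_fin]
  have hCpos : (0:ℝ) < (P.card : ℝ) := by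
    rw [hcard]
    exact_mod_cast Nat.choose_pos hr
  have hPne : P.Nonempty := Finset.card_pos.mp (by exact_mod_cast hCpos)
  set Se : ℝ := ∑ A ∈ P, Real.exp (h A) with hSe
  set T : ℝ := ∑ A ∈ P, h A with hT
  have hSepos : 0 < Se := Finset.sum_pos (fun A _ => Real.exp_pos _) hPne
  have hSCpos : 0 < Se / (P.card : ℝ) := div_pos hSepos hCpos
  -- Jensen
  have jensen : Real.exp (T / (P.card : ℝ)) ≤ Se / (P.card : ℝ) := by
    have hmem : ∀ A ∈ P, h A ∈ (Set.univ : Set ℝ) := fun _ _ => Set.mem_univ _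
    have := convexOn_exp.map_centerMass_le (t := P) (w := fun _ => (1:ℝ)) (p := h)
      (fun _ _ => zero_le_one)
      (by rw [Finset.sum_const, nsmul_eq_mul, mul_one]; exact hCpos) hmem
    simpa [Finset.centerMass, Finset.sum_const, nsmul_eq_mul, smul_eq_mul, div_eq_inv_mul,
      hSe, hT, Function.comp] using this
  -- upper bound with min
  have upper : Se ≤ (P.card : ℝ) *
      Real.exp (T / (P.card : ℝ) + ((min r (N - r) : ℕ) : ℝ) * (α^2/8)) := by
    rcases le_total r (N - r) with hm | hm
    · rw [min_eq_left hm]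
      have := main_ind α hα r hr h hlip
      rw [← hcard] at this
      exact this
    · rw [min_eq_right hm]
      have := compl_bound hr h α hα hlip
      rw [← hcard] at this
      exact this
  refine ⟨Real.log (Se / (P.card : ℝ)) - T / (P.card : ℝ), ?_, ?_, ?_⟩
  · have : T / (P.card : ℝ) ≤ Real.log (Se / (P.card : ℝ)) :=
      (Real.le_log_iff_exp_le hSCpos).mpr jensen
    linarith
  · have hle : Se / (P.card : ℝ) ≤
        Real.exp (T / (P.card : ℝ) + ((min r (N - r) : ℕ) : ℝ) * (α^2/8)) := by
      rw [div_le_iff₀ hCpos]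
      calc Se ≤ (P.card : ℝ) * Real.exp (T / (P.card : ℝ)
          + ((min r (N - r) : ℕ) : ℝ) * (α^2/8)) := upper
        _ = _ := by ring
    have hlog : Real.log (Se / (P.card : ℝ)) ≤
        T / (P.card : ℝ) + ((min r (N - r) : ℕ) : ℝ) * (α^2/8) := by
      rw [Real.log_le_iff_le_exp hSCpos]
      exact hle
    have : ((min r (N - r) : ℕ) : ℝ) * (α^2/8) = (1/8) * ((min r (N - r) : ℕ) : ℝ) * α^2 := by
      ring
    linarith [hlog, this.le]
  · rw [show T / (P.card : ℝ) + (Real.log (Se / (P.card : ℝ)) - T / (P.card : ℝ))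
      = Real.log (Se / (P.card : ℝ)) by ring, Real.exp_log hSCpos]
end

section
/- Let 0 ≤ r ≤ N be integers and let h be a real-valued function on the r-element subsets of {1,…,N}. Suppose there exists α ≥ 0 such that |h(A) − h(A′)| ≤ α whenever A and A′ are r-subsets with |A ∩ A′| = r − 1. Let C be a uniformly random r-subset of {1,…,N}. Then for any real t > 0, Pr( |h(C) − E h(C)| ≥ t ) ≤ 2·exp( −2t² / ( min{r, N−r}·α² ) ). -/
open Real Finset


lemma hoeff_core {p : ℝ} (hp0 : 0 ≤ p) (hp1 : p ≤ 1) (u : ℝ) :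
    (1 - p) * Real.exp (-p * u) + p * Real.exp ((1 - p) * u) ≤ Real.exp (u ^ 2 / 8) := by
  set g : ℝ → ℝ := fun x => 1 - p + p * Real.exp x with hg
  have hgpos : ∀ x, 0 < g x := by
    intro x
    show 0 < 1 - p + p * Real.exp x
    rcases eq_or_lt_of_le hp0 with h | h
    · simp [← h]
    · nlinarith [Real.exp_pos x, mul_pos h (Real.exp_pos x)]
  set D1 : ℝ → ℝ := fun x => p * Real.exp x / g x with hD1
  set ψ : ℝ → ℝ := fun x => x ^ 2 / 8 + p * x - Real.log (g x) with hψ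
  set ψ' : ℝ → ℝ := fun x => x / 4 + p - D1 x with hψ'
  have hgd : ∀ x, HasDerivAt g (p * Real.exp x) x := by
    intro x
    exact ((Real.hasDerivAt_exp x).const_mul p).const_add (1 - p)
  have hψd : ∀ x, HasDerivAt ψ (ψ' x) x := by
    intro x
    have hlog : HasDerivAt (fun x => Real.log (g x)) (p * Real.exp x / g x) x :=
      (hgd x).log (hgpos x).ne'
    have h1 : HasDerivAt (fun x : ℝ => x ^ 2 / 8 + p * x) (x / 4 + p) x := by
      have := ((hasDerivAt_pow 2 x).div_const 8).add ((hasDerivAt_id x).const_mul p)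
      exact this.congr_deriv (by ring)
    exact h1.sub hlog
  have hψ'd : ∀ x, HasDerivAt ψ' (1/4 - p * Real.exp x * (1 - p) / (g x) ^ 2) x := by
    intro x
    have hq : HasDerivAt D1 ((p * Real.exp x * g x - p * Real.exp x * (p * Real.exp x)) / (g x) ^ 2) x :=
      ((Real.hasDerivAt_exp x).const_mul p).div (hgd x) (hgpos x).ne'
    have h1 : HasDerivAt (fun x : ℝ => x / 4 + p) (1/4) x := by
      simpa using ((hasDerivAt_id x).div_const 4).add_const p
    have h2 := h1.sub hq
    apply h2.congr_deriv
    have hge : g x - p * Real.exp x = 1 - p := by show 1 - p + p * Real.exp x - _ = _; ring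
    have : p * Real.exp x * g x - p * Real.exp x * (p * Real.exp x) = p * Real.exp x * (1 - p) := by
      rw [← hge]; ring
    rw [this]
  have hψ'nonneg : ∀ x : ℝ, 0 ≤ 1/4 - p * Real.exp x * (1 - p) / (g x) ^ 2 := by
    intro x
    rw [sub_nonneg, div_le_iff₀ (pow_pos (hgpos x) 2)]
    nlinarith [sq_nonneg (1 - p - p * Real.exp x), hgpos x]
  have hmono : Monotone ψ' := monotone_of_hasDerivAt_nonneg hψ'd (fun x => hψ'nonneg x)
  have hψ'0 : ψ' 0 = 0 := by simp [ψ', D1, hg]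
  have hψ0 : ψ 0 = 0 := by simp [ψ, hg]
  have hψnonneg : ∀ x : ℝ, 0 ≤ ψ x := by
    intro x
    rcases le_total 0 x with hx | hx
    · have : MonotoneOn ψ (Set.Ici 0) := by
        apply monotoneOn_of_hasDerivWithinAt_nonneg (convex_Ici 0)
          (fun y _ => (hψd y).continuousAt.continuousWithinAt)
          (fun y _ => (hψd y).hasDerivWithinAt)
        intro y hy
        rw [interior_Ici] at hy
        rw [← hψ'0]
        exact hmono (le_of_lt hy)
      have := this (Set.self_mem_Ici) hx hx
      rwa [hψ0] at this
    · have : AntitoneOn ψ (Set.Iic 0) := by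
        apply antitoneOn_of_hasDerivWithinAt_nonpos (convex_Iic 0)
          (fun y _ => (hψd y).continuousAt.continuousWithinAt)
          (fun y _ => (hψd y).hasDerivWithinAt)
        intro y hy
        rw [interior_Iic] at hy
        rw [← hψ'0]
        exact hmono (le_of_lt hy)
      have := this hx (Set.self_mem_Iic) hx
      rwa [hψ0] at this
  -- conclude
  have key : -p * u + Real.log (g u) ≤ u ^ 2 / 8 := by
    have := hψnonneg u
    simp only [ψ] at this
    linarith
  calc (1 - p) * Real.exp (-p * u) + p * Real.exp ((1 - p) * u)
      = Real.exp (-p * u) * g u := by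
        show _ = _ * (1 - p + p * Real.exp u)
        rw [show (1-p)*u = -p*u + u by ring, Real.exp_add]
        ring
    _ = Real.exp (-p * u + Real.log (g u)) := by
        rw [Real.exp_add, Real.exp_log (hgpos u)]
    _ ≤ Real.exp (u ^ 2 / 8) := Real.exp_le_exp.2 key

lemma hoeffding_fin {ι : Type*} (s : Finset ι) (hs : s.Nonempty) (X : ι → ℝ) (α l : ℝ)
    (hX : ∀ i ∈ s, ∀ j ∈ s, X i - X j ≤ α) :
    ∑ i ∈ s, Real.exp (l * (X i - (∑ j ∈ s, X j) / s.card))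
      ≤ s.card * Real.exp (l ^ 2 * α ^ 2 / 8) := by
  obtain ⟨i₀, hi₀⟩ := hs
  have hcard : (0:ℝ) < s.card := by exact_mod_cast Finset.card_pos.2 ⟨i₀, hi₀⟩
  set μ : ℝ := (∑ j ∈ s, X j) / s.card with hμ
  have hsum : ∑ j ∈ s, X j = s.card * μ := by
    rw [hμ]; field_simp
  set a : ℝ := s.inf' ⟨i₀, hi₀⟩ X with ha
  have hal : ∀ i ∈ s, a ≤ X i := fun i hi => Finset.inf'_le X hi
  have hau : ∀ i ∈ s, X i ≤ a + α := by
    intro i hi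
    obtain ⟨j, hj, hjv⟩ := Finset.exists_mem_eq_inf' ⟨i₀, hi₀⟩ X
    have := hX i hi j hj
    rw [ha, hjv]; linarith
  have hα0 : 0 ≤ α := by have := hX i₀ hi₀ i₀ hi₀; linarith
  have hμa : a ≤ μ := by
    rw [hμ, le_div_iff₀ hcard]
    calc a * s.card = ∑ _j ∈ s, a := by rw [Finset.sum_const]; ring
      _ ≤ ∑ j ∈ s, X j := Finset.sum_le_sum hal
  have hμb : μ ≤ a + α := by
    rw [hμ, div_le_iff₀ hcard]
    calc ∑ j ∈ s, X j ≤ ∑ _j ∈ s, (a + α) := Finset.sum_le_sum hau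
      _ = (a + α) * s.card := by rw [Finset.sum_const]; ring
  rcases eq_or_lt_of_le hα0 with hα | hα
  · -- α = 0 : all values equal μ
    have hXeq : ∀ i ∈ s, X i = μ := by
      intro i hi
      have h1 := hal i hi
      have h2 := hau i hi
      have := hμa; have := hμb
      rw [← hα] at *
      linarith
    have : ∑ i ∈ s, Real.exp (l * (X i - μ)) = s.card := by
      rw [Finset.sum_congr rfl (fun i hi => by rw [hXeq i hi, sub_self, mul_zero, Real.exp_zero])]
      simp
    rw [this]
    nlinarith [Real.one_le_exp (by positivity : (0:ℝ) ≤ l ^ 2 * α ^ 2 / 8), hcard]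
  · set b : ℝ := a + α with hb
    set p : ℝ := (μ - a) / α with hp
    have hp0 : 0 ≤ p := by apply div_nonneg; linarith; linarith
    have hp1 : p ≤ 1 := by rw [hp, div_le_one hα]; linarith
    have hconv : ∀ i ∈ s, Real.exp (l * (X i - μ))
        ≤ (b - X i)/α * Real.exp (l * (a - μ)) + (X i - a)/α * Real.exp (l * (b - μ)) := by
      intro i hi
      have h1 := hal i hi
      have h2 := hau i hi
      have key := convexOn_exp.2 (Set.mem_univ (l * (a - μ))) (Set.mem_univ (l * (b - μ)))
        (show (0:ℝ) ≤ (b - X i)/α from div_nonneg (by linarith) hα.le)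
        (show (0:ℝ) ≤ (X i - a)/α from div_nonneg (by linarith) hα.le)
        (by field_simp; rw [hb]; ring)
      have harg : ((b - X i)/α) • (l * (a - μ)) + ((X i - a)/α) • (l * (b - μ)) = l * (X i - μ) := by
        rw [smul_eq_mul, smul_eq_mul]
        have hane : α ≠ 0 := ne_of_gt hα
        field_simp
        rw [hb]; ring
      rw [harg] at key
      simpa [smul_eq_mul] using key
    calc ∑ i ∈ s, Real.exp (l * (X i - μ))
        ≤ ∑ i ∈ s, ((b - X i)/α * Real.exp (l * (a - μ)) + (X i - a)/α * Real.exp (l * (b - μ))) :=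
          Finset.sum_le_sum hconv
      _ = s.card * ((1-p) * Real.exp (l * (a - μ)) + p * Real.exp (l * (b - μ))) := by
          rw [Finset.sum_add_distrib, ← Finset.sum_mul, ← Finset.sum_mul,
            ← Finset.sum_div, ← Finset.sum_div]
          have e1 : ∑ i ∈ s, (b - X i) = s.card * (b - μ) := by
            rw [Finset.sum_sub_distrib, Finset.sum_const, hsum]; push_cast; ring
          have e2 : ∑ i ∈ s, (X i - a) = s.card * (μ - a) := by
            rw [Finset.sum_sub_distrib, Finset.sum_const, hsum]; push_cast; ring
          have hbp : (b - μ)/α = 1 - p := by rw [hb, hp]; field_simp; ring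
          rw [e1, e2, mul_div_assoc, mul_div_assoc, hbp, ← hp]
          ring
      _ ≤ s.card * Real.exp (l ^ 2 * α ^ 2 / 8) := by
          apply mul_le_mul_of_nonneg_left _ (le_of_lt hcard)
          have harg1 : l * (a - μ) = -p * (l * α) := by
            rw [hp]; field_simp; ring
          have harg2 : l * (b - μ) = (1 - p) * (l * α) := by
            rw [hp, hb]; field_simp; ring
          rw [harg1, harg2]
          have := hoeff_core hp0 hp1 (l * α)
          calc (1-p) * Real.exp (-p * (l*α)) + p * Real.exp ((1-p)*(l*α))
              ≤ Real.exp ((l*α)^2/8) := this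
            _ = Real.exp (l^2 * α^2/8) := by ring_nf

lemma card_F_exp (N r : ℕ) (S : Finset (Fin N)) (hS : S.card ≤ r) :
    (((Finset.powersetCard r (univ : Finset (Fin N)))).filter (fun C => S ⊆ C)).card
      = (N - S.card).choose (r - S.card) := by
  have : (((Finset.powersetCard r (univ : Finset (Fin N)))).filter (fun C => S ⊆ C)).card
      = (Finset.powersetCard (r - S.card) Sᶜ).card := by
    apply Finset.card_bij' (fun C _ => C \ S) (fun T _ => T ∪ S)
    · intro C hC
      simp only [Finset.mem_filter, Finset.mem_powersetCard_univ] at hC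
      rw [Finset.mem_powersetCard]
      constructor
      · intro a ha
        simp only [Finset.mem_sdiff] at ha
        simp [Finset.mem_compl, ha.2]
      · rw [Finset.card_sdiff_of_subset hC.2, hC.1]
    · intro T hT
      rw [Finset.mem_powersetCard] at hT
      have hdisj : Disjoint T S := by
        rw [Finset.disjoint_left]
        intro a ha
        have := hT.1 ha
        simpa [Finset.mem_compl] using this
      simp only [Finset.mem_filter, Finset.mem_powersetCard_univ]
      constructor
      · rw [Finset.card_union_of_disjoint hdisj, hT.2]
        omega
      · exact Finset.subset_union_right
    · intro C hC
      simp only [Finset.mem_filter] at hC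
      exact Finset.sdiff_union_of_subset hC.2
    · intro T hT
      rw [Finset.mem_powersetCard] at hT
      apply Finset.union_sdiff_cancel_right
      rw [Finset.disjoint_left]
      intro a ha
      have := hT.1 ha
      simpa [Finset.mem_compl] using this
  rw [this, Finset.card_powersetCard, Finset.card_compl, Fintype.card_fin]

lemma sum_insert_split_exp (N r : ℕ) (f : Finset (Fin N) → ℝ) (S : Finset (Fin N)) :
    ∑ x ∈ Sᶜ, ∑ C ∈ (Finset.powersetCard r (univ : Finset (Fin N))).filter
        (fun C => insert x S ⊆ C), f C
      = ∑ C ∈ (Finset.powersetCard r (univ : Finset (Fin N))).filter (fun C => S ⊆ C),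
          ((C \ S).card : ℝ) * f C := by
  have h1 : ∀ x : Fin N, (Finset.powersetCard r (univ : Finset (Fin N))).filter
      (fun C => insert x S ⊆ C)
      = ((Finset.powersetCard r (univ : Finset (Fin N))).filter (fun C => S ⊆ C)).filter
          (fun C => x ∈ C) := by
    intro x
    rw [Finset.filter_filter]
    apply Finset.filter_congr
    intro C _
    simp [Finset.insert_subset_iff, and_comm]
  calc ∑ x ∈ Sᶜ, ∑ C ∈ (Finset.powersetCard r (univ : Finset (Fin N))).filter
        (fun C => insert x S ⊆ C), f C
      = ∑ x ∈ Sᶜ, ∑ C ∈ (Finset.powersetCard r (univ : Finset (Fin N))).filter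
          (fun C => S ⊆ C), if x ∈ C then f C else 0 := by
        refine Finset.sum_congr rfl (fun x _ => ?_)
        rw [h1 x, Finset.sum_filter]
    _ = ∑ C ∈ (Finset.powersetCard r (univ : Finset (Fin N))).filter (fun C => S ⊆ C),
          ∑ x ∈ Sᶜ, if x ∈ C then f C else 0 := Finset.sum_comm
    _ = ∑ C ∈ (Finset.powersetCard r (univ : Finset (Fin N))).filter (fun C => S ⊆ C),
          ((C \ S).card : ℝ) * f C := by
        refine Finset.sum_congr rfl (fun C hC => ?_)
        rw [← Finset.sum_filter]
        have : Sᶜ.filter (fun x => x ∈ C) = C \ S := by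
          ext a
          simp [Finset.mem_compl, Finset.mem_sdiff, and_comm]
        rw [this, Finset.sum_const, nsmul_eq_mul]

lemma sum_swap_eq_exp (N r : ℕ) (h : Finset (Fin N) → ℝ) (S : Finset (Fin N))
    (x y : Fin N) (hx : x ∉ S) (hy : y ∉ S) (hxy : x ≠ y)
    (α : ℝ) (hα : 0 ≤ α)
    (hlip : ∀ A A' : Finset (Fin N), A.card = r → A'.card = r →
      (A ∩ A').card = r - 1 → |h A - h A'| ≤ α) :
    |∑ C ∈ (Finset.powersetCard r (univ : Finset (Fin N))).filter (fun C => insert x S ⊆ C), h C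
     - ∑ D ∈ (Finset.powersetCard r (univ : Finset (Fin N))).filter (fun D => insert y S ⊆ D), h D|
    ≤ ((Finset.powersetCard r (univ : Finset (Fin N))).filter
        (fun C => insert x S ⊆ C)).card * α := by
  classical
  set τ : Finset (Fin N) → Finset (Fin N) := fun C => if y ∈ C then C else insert y (C.erase x)
    with hτ
  set τ' : Finset (Fin N) → Finset (Fin N) := fun D => if x ∈ D then D else insert x (D.erase y)
    with hτ'
  set Fx := (Finset.powersetCard r (univ : Finset (Fin N))).filter (fun C => insert x S ⊆ C)
  set Fy := (Finset.powersetCard r (univ : Finset (Fin N))).filter (fun D => insert y S ⊆ D)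
  have hmemx : ∀ C, C ∈ Fx ↔ C.card = r ∧ x ∈ C ∧ S ⊆ C := by
    intro C
    simp [Fx, Finset.mem_filter, Finset.mem_powersetCard_univ, Finset.insert_subset_iff, and_assoc]
  have hmemy : ∀ D, D ∈ Fy ↔ D.card = r ∧ y ∈ D ∧ S ⊆ D := by
    intro D
    simp [Fy, Finset.mem_filter, Finset.mem_powersetCard_univ, Finset.insert_subset_iff, and_assoc]
  have hτmem : ∀ C ∈ Fx, τ C ∈ Fy := by
    intro C hC
    rw [hmemx] at hC
    obtain ⟨hcard, hxC, hSC⟩ := hC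
    rw [hmemy]
    by_cases hyC : y ∈ C
    · simp only [hτ, if_pos hyC]
      exact ⟨hcard, hyC, hSC⟩
    · simp only [hτ, if_neg hyC]
      refine ⟨?_, Finset.mem_insert_self _ _, ?_⟩
      · rw [Finset.card_insert_of_notMem (fun hc => hyC (Finset.mem_of_mem_erase hc)),
          Finset.card_erase_of_mem hxC, hcard]
        have : 1 ≤ r := by
          rw [← hcard]; exact Finset.card_pos.2 ⟨x, hxC⟩
        omega
      · intro s hs
        apply Finset.mem_insert_of_mem
        exact Finset.mem_erase_of_ne_of_mem (fun he => hx (he ▸ hs)) (hSC hs)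
  have hτ'mem : ∀ D ∈ Fy, τ' D ∈ Fx := by
    intro D hD
    rw [hmemy] at hD
    obtain ⟨hcard, hyD, hSD⟩ := hD
    rw [hmemx]
    by_cases hxD : x ∈ D
    · simp only [hτ', if_pos hxD]
      exact ⟨hcard, hxD, hSD⟩
    · simp only [hτ', if_neg hxD]
      refine ⟨?_, Finset.mem_insert_self _ _, ?_⟩
      · rw [Finset.card_insert_of_notMem (fun hc => hxD (Finset.mem_of_mem_erase hc)),
          Finset.card_erase_of_mem hyD, hcard]
        have : 1 ≤ r := by
          rw [← hcard]; exact Finset.card_pos.2 ⟨y, hyD⟩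
        omega
      · intro s hs
        apply Finset.mem_insert_of_mem
        exact Finset.mem_erase_of_ne_of_mem (fun he => hy (he ▸ hs)) (hSD hs)
  have hinv1 : ∀ C ∈ Fx, τ' (τ C) = C := by
    intro C hC
    rw [hmemx] at hC
    obtain ⟨hcard, hxC, hSC⟩ := hC
    by_cases hyC : y ∈ C
    · simp only [hτ, if_pos hyC, hτ', if_pos hxC]
    · have hxτ : x ∉ insert y (C.erase x) := by
        simp [hxy, Finset.mem_erase]
      simp only [hτ, if_neg hyC, hτ', if_neg hxτ]
      rw [Finset.erase_insert (fun hc => hyC (Finset.mem_of_mem_erase hc)),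
        Finset.insert_erase hxC]
  have hinv2 : ∀ D ∈ Fy, τ (τ' D) = D := by
    intro D hD
    rw [hmemy] at hD
    obtain ⟨hcard, hyD, hSD⟩ := hD
    by_cases hxD : x ∈ D
    · simp only [hτ', if_pos hxD, hτ, if_pos hyD]
    · have hyτ : y ∉ insert x (D.erase y) := by
        simp [hxy.symm, Finset.mem_erase]
      simp only [hτ', if_neg hxD, hτ, if_neg hyτ]
      rw [Finset.erase_insert (fun hc => hxD (Finset.mem_of_mem_erase hc)),
        Finset.insert_erase hyD]
  have hsum : ∑ D ∈ Fy, h D = ∑ C ∈ Fx, h (τ C) :=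
    (Finset.sum_nbij' τ τ' hτmem hτ'mem hinv1 hinv2 (fun C _ => rfl)).symm
  have hpt : ∀ C ∈ Fx, |h C - h (τ C)| ≤ α := by
    intro C hC
    rw [hmemx] at hC
    obtain ⟨hcard, hxC, hSC⟩ := hC
    by_cases hyC : y ∈ C
    · simp only [hτ, if_pos hyC, sub_self, abs_zero]; exact hα
    · simp only [hτ, if_neg hyC]
      apply hlip
      · exact hcard
      · rw [Finset.card_insert_of_notMem (fun hc => hyC (Finset.mem_of_mem_erase hc)),
          Finset.card_erase_of_mem hxC, hcard]
        have : 1 ≤ r := by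
          rw [← hcard]; exact Finset.card_pos.2 ⟨x, hxC⟩
        omega
      · have : C ∩ insert y (C.erase x) = C.erase x := by
          ext a
          simp only [Finset.mem_inter, Finset.mem_insert, Finset.mem_erase]
          constructor
          · rintro ⟨haC, hay | ⟨hax, _⟩⟩
            · exact absurd (hay ▸ haC) hyC
            · exact ⟨hax, haC⟩
          · rintro ⟨hax, haC⟩
            exact ⟨haC, Or.inr ⟨hax, haC⟩⟩
        rw [this, Finset.card_erase_of_mem hxC, hcard]
  rw [hsum, ← Finset.sum_sub_distrib]
  calc |∑ C ∈ Fx, (h C - h (τ C))| ≤ ∑ C ∈ Fx, |h C - h (τ C)| := Finset.abs_sum_le_sum_abs _ _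
    _ ≤ ∑ _C ∈ Fx, α := Finset.sum_le_sum hpt
    _ = Fx.card * α := by rw [Finset.sum_const, nsmul_eq_mul]

def FF (N r : ℕ) (S : Finset (Fin N)) : Finset (Finset (Fin N)) :=
  (Finset.powersetCard r (univ : Finset (Fin N))).filter (fun C => S ⊆ C)

noncomputable def gg (N r : ℕ) (h : Finset (Fin N) → ℝ) (S : Finset (Fin N)) : ℝ :=
  (∑ C ∈ FF N r S, h C) / ((FF N r S).card : ℝ)

lemma card_FF (N r : ℕ) (S : Finset (Fin N)) (hS : S.card ≤ r) :
    (FF N r S).card = (N - S.card).choose (r - S.card) :=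
  card_F_exp N r S hS

lemma sum_insert_split (N r : ℕ) (f : Finset (Fin N) → ℝ) (S : Finset (Fin N)) :
    ∑ x ∈ Sᶜ, ∑ C ∈ FF N r (insert x S), f C
      = ∑ C ∈ FF N r S, ((C \ S).card : ℝ) * f C :=
  sum_insert_split_exp N r f S

lemma sum_swap_eq (N r : ℕ) (h : Finset (Fin N) → ℝ) (S : Finset (Fin N))
    (x y : Fin N) (hx : x ∉ S) (hy : y ∉ S) (hxy : x ≠ y)
    (α : ℝ) (hα : 0 ≤ α)
    (hlip : ∀ A A' : Finset (Fin N), A.card = r → A'.card = r →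
      (A ∩ A').card = r - 1 → |h A - h A'| ≤ α) :
    |∑ C ∈ FF N r (insert x S), h C - ∑ D ∈ FF N r (insert y S), h D|
      ≤ ((FF N r (insert x S)).card : ℝ) * α :=
  sum_swap_eq_exp N r h S x y hx hy hxy α hα hlip

-- helper facts
lemma card_sdiff_FF (N r : ℕ) (S C : Finset (Fin N)) (hC : C ∈ FF N r S) :
    (C \ S).card = r - S.card := by
  simp only [FF, Finset.mem_filter, Finset.mem_powersetCard_univ] at hC
  rw [Finset.card_sdiff_of_subset hC.2, hC.1]

lemma mgf_bound (N r : ℕ) (hr : r ≤ N) (h : Finset (Fin N) → ℝ) (α : ℝ) (hα : 0 ≤ α)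
    (hlip : ∀ A A' : Finset (Fin N), A.card = r → A'.card = r →
      (A ∩ A').card = r - 1 → |h A - h A'| ≤ α) (l : ℝ) :
    ∀ j : ℕ, ∀ S : Finset (Fin N), S.card + j = r →
      ∑ C ∈ FF N r S, Real.exp (l * (h C - gg N r h S))
        ≤ ((FF N r S).card : ℝ) * Real.exp (l ^ 2 * j * α ^ 2 / 8) := by
  intro j
  induction j with
  | zero =>
    intro S hS
    rw [Nat.add_zero] at hS
    have hF : FF N r S = {S} := by
      ext C
      simp only [FF, Finset.mem_filter, Finset.mem_powersetCard_univ, Finset.mem_singleton]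
      constructor
      · rintro ⟨h1, h2⟩
        exact (Finset.eq_of_subset_of_card_le h2 (by rw [h1, hS])).symm
      · rintro rfl
        exact ⟨hS, Finset.Subset.refl _⟩
    rw [hF]
    simp [gg, hF]
  | succ j ih =>
    intro S hS
    set k := S.card with hk
    have hkr : k < r := by omega
    have hkN : k < N := by omega
    set M : ℕ := (FF N r S).card with hM
    set M1 : ℕ := (N - k - 1).choose (r - k - 1) with hM1
    have hMval : M = (N - k).choose (r - k) := card_FF N r S (by omega)
    have hMpos : 0 < M := by
      rw [hMval]; exact Nat.choose_pos (by omega)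
    have hM1pos : 0 < M1 := by
      rw [hM1]; exact Nat.choose_pos (by omega)
    have hcardFx : ∀ x ∉ S, (FF N r (insert x S)).card = M1 := by
      intro x hx
      rw [card_FF N r (insert x S) (by rw [Finset.card_insert_of_notMem hx]; omega),
        Finset.card_insert_of_notMem hx]
      congr 1 <;> omega
    have hident : (N - k) * M1 = (r - k) * M := by
      have key : ∀ a b : ℕ, (a + 1) * a.choose b = (a + 1).choose (b + 1) * (b + 1) := by
        intro a b
        simpa [Nat.succ_eq_add_one] using Nat.add_one_mul_choose_eq a b
      have e1 : N - k - 1 + 1 = N - k := by omega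
      have e2 : r - k - 1 + 1 = r - k := by omega
      have hkey := key (N - k - 1) (r - k - 1)
      rw [e1, e2] at hkey
      rw [hMval, hM1, hkey, Nat.mul_comm]
    set gS := gg N r h S with hgS
    set X : Fin N → ℝ := fun x => gg N r h (insert x S) with hX
    -- tower property
    have htower : (∑ x ∈ Sᶜ, X x) / (Sᶜ.card : ℝ) = gS := by
      have hXv : ∀ x ∈ Sᶜ, X x = (∑ C ∈ FF N r (insert x S), h C) / (M1 : ℝ) := by
        intro x hx
        rw [hX]
        simp only [gg]
        rw [hcardFx x (Finset.mem_compl.1 hx)]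
      rw [Finset.sum_congr rfl hXv, ← Finset.sum_div, sum_insert_split]
      have hconst : ∀ C ∈ FF N r S, ((C \ S).card : ℝ) * h C = (r - k : ℕ) * h C := by
        intro C hC
        rw [card_sdiff_FF N r S C hC]
      rw [Finset.sum_congr rfl hconst, ← Finset.mul_sum]
      rw [Finset.card_compl, Fintype.card_fin, hgS]
      simp only [gg, ← hM, ← hk]
      have hNk0 : (0:ℝ) < ((N - k : ℕ) : ℝ) := by
        have : 0 < N - k := by omega
        exact_mod_cast this
      have hM10 : (0:ℝ) < (M1 : ℝ) := by exact_mod_cast hM1pos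
      have hM0 : (0:ℝ) < (M : ℝ) := by exact_mod_cast hMpos
      have hidR : ((N - k : ℕ) : ℝ) * (M1 : ℝ) = ((r - k : ℕ) : ℝ) * (M : ℝ) := by
        exact_mod_cast hident
      rw [div_div, div_eq_div_iff (by positivity) (ne_of_gt hM0)]
      linear_combination (-(∑ C ∈ FF N r S, h C)) * hidR
    -- Lipschitz property of X on Sᶜ
    have hXlip : ∀ x ∈ Sᶜ, ∀ y ∈ Sᶜ, X x - X y ≤ α := by
      intro x hx y hy
      rcases eq_or_ne x y with rfl | hxy
      · simp [hα]
      · have hx' : x ∉ S := Finset.mem_compl.1 hx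
        have hy' : y ∉ S := Finset.mem_compl.1 hy
        have hswap := sum_swap_eq N r h S x y hx' hy' hxy α hα hlip
        have hcx := hcardFx x hx'
        have hcy := hcardFx y hy'
        rw [hX]
        simp only [gg, hcx, hcy]
        rw [div_sub_div_same, div_le_iff₀ (by exact_mod_cast hM1pos)]
        calc ∑ C ∈ FF N r (insert x S), h C - ∑ D ∈ FF N r (insert y S), h D
            ≤ |∑ C ∈ FF N r (insert x S), h C - ∑ D ∈ FF N r (insert y S), h D| := le_abs_self _
          _ ≤ ((FF N r (insert x S)).card : ℝ) * α := hswap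
          _ = α * (M1 : ℝ) := by rw [hcx]; ring
    have hScne : Sᶜ.Nonempty := by
      rw [← Finset.card_pos, Finset.card_compl, Fintype.card_fin]
      omega
    have hhoef := hoeffding_fin Sᶜ hScne X α l hXlip
    rw [htower] at hhoef
    -- main chain
    have hrk : r - k = j + 1 := by omega
    have step1 : ((j : ℝ) + 1) * ∑ C ∈ FF N r S, Real.exp (l * (h C - gS))
        = ∑ x ∈ Sᶜ, ∑ C ∈ FF N r (insert x S), Real.exp (l * (h C - gS)) := by
      rw [sum_insert_split]
      rw [Finset.mul_sum]
      refine Finset.sum_congr rfl (fun C hC => ?_)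
      rw [card_sdiff_FF N r S C hC, hrk]
      push_cast
      ring
    have step2 : ∀ x ∈ Sᶜ, ∑ C ∈ FF N r (insert x S), Real.exp (l * (h C - gS))
        ≤ Real.exp (l * (X x - gS)) * ((M1 : ℝ) * Real.exp (l ^ 2 * j * α ^ 2 / 8)) := by
      intro x hx
      have hx' : x ∉ S := Finset.mem_compl.1 hx
      have hsplit : ∀ C, Real.exp (l * (h C - gS))
          = Real.exp (l * (X x - gS)) * Real.exp (l * (h C - X x)) := by
        intro C
        rw [← Real.exp_add]
        congr 1
        ring
      rw [Finset.sum_congr rfl (fun C _ => hsplit C), ← Finset.mul_sum]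
      apply mul_le_mul_of_nonneg_left _ (Real.exp_nonneg _)
      have hih := ih (insert x S) (by rw [Finset.card_insert_of_notMem hx']; omega)
      rw [hcardFx x hx'] at hih
      exact hih
    have step3 : ((j : ℝ) + 1) * ∑ C ∈ FF N r S, Real.exp (l * (h C - gS))
        ≤ (∑ x ∈ Sᶜ, Real.exp (l * (X x - gS))) * ((M1 : ℝ) * Real.exp (l ^ 2 * j * α ^ 2 / 8)) := by
      rw [step1, Finset.sum_mul]
      exact Finset.sum_le_sum step2
    have step4 : (∑ x ∈ Sᶜ, Real.exp (l * (X x - gS)))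
        ≤ (Sᶜ.card : ℝ) * Real.exp (l ^ 2 * α ^ 2 / 8) := hhoef
    have hcardSc : (Sᶜ.card : ℝ) = ((N - k : ℕ) : ℝ) := by
      rw [Finset.card_compl, Fintype.card_fin]
    have step5 : ((j : ℝ) + 1) * ∑ C ∈ FF N r S, Real.exp (l * (h C - gS))
        ≤ ((N - k : ℕ) : ℝ) * Real.exp (l ^ 2 * α ^ 2 / 8)
            * ((M1 : ℝ) * Real.exp (l ^ 2 * j * α ^ 2 / 8)) := by
      refine le_trans step3 ?_
      rw [← hcardSc]
      apply mul_le_mul_of_nonneg_right step4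
      positivity
    have hfin : ((N - k : ℕ) : ℝ) * Real.exp (l ^ 2 * α ^ 2 / 8)
            * ((M1 : ℝ) * Real.exp (l ^ 2 * j * α ^ 2 / 8))
        = ((j : ℝ) + 1) * ((M : ℝ) * Real.exp (l ^ 2 * (j + 1) * α ^ 2 / 8)) := by
      have hexp : Real.exp (l ^ 2 * α ^ 2 / 8) * Real.exp (l ^ 2 * j * α ^ 2 / 8)
          = Real.exp (l ^ 2 * (j + 1) * α ^ 2 / 8) := by
        rw [← Real.exp_add]
        congr 1
        ring
      have hidentR : ((N - k : ℕ) : ℝ) * (M1 : ℝ) = ((j : ℝ) + 1) * (M : ℝ) := by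
        have hident' := hident
        rw [hrk] at hident'
        exact_mod_cast hident'
      calc ((N - k : ℕ) : ℝ) * Real.exp (l ^ 2 * α ^ 2 / 8)
            * ((M1 : ℝ) * Real.exp (l ^ 2 * j * α ^ 2 / 8))
          = (((N - k : ℕ) : ℝ) * (M1 : ℝ))
              * (Real.exp (l ^ 2 * α ^ 2 / 8) * Real.exp (l ^ 2 * j * α ^ 2 / 8)) := by ring
        _ = ((j : ℝ) + 1) * ((M : ℝ) * Real.exp (l ^ 2 * (j + 1) * α ^ 2 / 8)) := by
            rw [hexp, hidentR]; ring
    rw [hfin] at step5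
    have hj1 : (0:ℝ) < (j : ℝ) + 1 := by positivity
    have := (mul_le_mul_iff_right₀ hj1).1 step5
    calc ∑ C ∈ FF N r S, Real.exp (l * (h C - gS))
        ≤ (M : ℝ) * Real.exp (l ^ 2 * (j + 1) * α ^ 2 / 8) := this
      _ = (M : ℝ) * Real.exp (l ^ 2 * (j + 1 : ℕ) * α ^ 2 / 8) := by push_cast; ring_nf
lemma FF_empty (N r : ℕ) :
    FF N r ∅ = Finset.powersetCard r (univ : Finset (Fin N)) := by
  rw [FF, Finset.filter_true_of_mem (fun C _ => Finset.empty_subset C)]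

lemma one_side (N r : ℕ) (hr0 : 0 < r) (hr : r ≤ N) (h : Finset (Fin N) → ℝ)
    (α : ℝ) (hα : 0 < α)
    (hlip : ∀ A A' : Finset (Fin N), A.card = r → A'.card = r →
      (A ∩ A').card = r - 1 → |h A - h A'| ≤ α)
    (t : ℝ) (ht : 0 < t) :
    (((Finset.powersetCard r (univ : Finset (Fin N))).filter
        (fun A => t ≤ h A - (∑ B ∈ Finset.powersetCard r (univ : Finset (Fin N)), h B) /
          ((Finset.powersetCard r (univ : Finset (Fin N))).card : ℝ))).card : ℝ)
      ≤ ((Finset.powersetCard r (univ : Finset (Fin N))).card : ℝ)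
          * Real.exp (-2 * t ^ 2 / (r * α ^ 2)) := by
  set Ω := Finset.powersetCard r (univ : Finset (Fin N)) with hΩ
  set Eh := (∑ B ∈ Ω, h B) / (Ω.card : ℝ) with hEh
  set l : ℝ := 4 * t / (r * α ^ 2) with hl
  have hr0' : (0:ℝ) < (r : ℝ) := by exact_mod_cast hr0
  have hl0 : 0 < l := by
    rw [hl]; positivity
  have hmgf := mgf_bound N r hr h α hα.le hlip l r ∅ (by simp)
  rw [FF_empty] at hmgf
  have hggE : gg N r h ∅ = Eh := by
    rw [gg, FF_empty, hEh]
  rw [hggE] at hmgf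
  have hmarkov : ((Ω.filter (fun A => t ≤ h A - Eh)).card : ℝ) * Real.exp (l * t)
      ≤ ∑ C ∈ Ω, Real.exp (l * (h C - Eh)) := by
    calc ((Ω.filter (fun A => t ≤ h A - Eh)).card : ℝ) * Real.exp (l * t)
        = ∑ _C ∈ Ω.filter (fun A => t ≤ h A - Eh), Real.exp (l * t) := by
          rw [Finset.sum_const, nsmul_eq_mul]
      _ ≤ ∑ C ∈ Ω.filter (fun A => t ≤ h A - Eh), Real.exp (l * (h C - Eh)) := by
          apply Finset.sum_le_sum
          intro C hC
          have := (Finset.mem_filter.1 hC).2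
          apply Real.exp_le_exp.2
          apply mul_le_mul_of_nonneg_left this hl0.le
      _ ≤ ∑ C ∈ Ω, Real.exp (l * (h C - Eh)) := by
          apply Finset.sum_le_sum_of_subset_of_nonneg (Finset.filter_subset _ _)
          intro C _ _
          exact Real.exp_nonneg _
  have hchain : ((Ω.filter (fun A => t ≤ h A - Eh)).card : ℝ) * Real.exp (l * t)
      ≤ (Ω.card : ℝ) * Real.exp (l ^ 2 * r * α ^ 2 / 8) := le_trans hmarkov hmgf
  have hexp : Real.exp (l ^ 2 * r * α ^ 2 / 8) / Real.exp (l * t)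
      = Real.exp (-2 * t ^ 2 / (r * α ^ 2)) := by
    rw [← Real.exp_sub]
    congr 1
    rw [hl]
    field_simp
    ring
  rw [← hexp, ← mul_div_assoc, le_div_iff₀ (Real.exp_pos _)]
  exact hchain

lemma two_side (N r : ℕ) (hr0 : 0 < r) (hr : r ≤ N) (h : Finset (Fin N) → ℝ)
    (α : ℝ) (hα : 0 < α)
    (hlip : ∀ A A' : Finset (Fin N), A.card = r → A'.card = r →
      (A ∩ A').card = r - 1 → |h A - h A'| ≤ α)
    (t : ℝ) (ht : 0 < t) :
    (((Finset.powersetCard r (univ : Finset (Fin N))).filter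
        (fun A => t ≤ |h A - (∑ B ∈ Finset.powersetCard r (univ : Finset (Fin N)), h B) /
          ((Finset.powersetCard r (univ : Finset (Fin N))).card : ℝ)|)).card : ℝ)
      ≤ ((Finset.powersetCard r (univ : Finset (Fin N))).card : ℝ)
          * (2 * Real.exp (-2 * t ^ 2 / (r * α ^ 2))) := by
  classical
  set Ω := Finset.powersetCard r (univ : Finset (Fin N)) with hΩ
  set Eh := (∑ B ∈ Ω, h B) / (Ω.card : ℝ) with hEh
  have h1 := one_side N r hr0 hr h α hα hlip t ht
  have hlip' : ∀ A A' : Finset (Fin N), A.card = r → A'.card = r →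
      (A ∩ A').card = r - 1 → |(-h) A - (-h) A'| ≤ α := by
    intro A A' hA hA' hAA'
    have := hlip A A' hA hA' hAA'
    calc |(-h) A - (-h) A'| = |h A - h A'| := by
            rw [abs_sub_comm]; congr 1; simp; ring
      _ ≤ α := this
  have h2 := one_side N r hr0 hr (-h) α hα hlip' t ht
  have hEh' : (∑ B ∈ Ω, (-h) B) / (Ω.card : ℝ) = -Eh := by
    rw [hEh]
    simp [Finset.sum_neg_distrib, neg_div]
  rw [← hΩ] at h1 h2
  rw [← hEh] at h1
  rw [hEh'] at h2
  have hsub : Ω.filter (fun A => t ≤ |h A - Eh|)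
      ⊆ Ω.filter (fun A => t ≤ h A - Eh) ∪ Ω.filter (fun A => t ≤ (-h) A - -Eh) := by
    intro A hA
    rw [Finset.mem_filter] at hA
    rw [Finset.mem_union, Finset.mem_filter, Finset.mem_filter]
    rcases abs_cases (h A - Eh) with ⟨he, _⟩ | ⟨he, _⟩
    · left; exact ⟨hA.1, he ▸ hA.2⟩
    · right
      refine ⟨hA.1, ?_⟩
      have := hA.2
      rw [he] at this
      simp only [Pi.neg_apply]
      linarith
  calc ((Ω.filter (fun A => t ≤ |h A - Eh|)).card : ℝ)
      ≤ ((Ω.filter (fun A => t ≤ h A - Eh) ∪ Ω.filter (fun A => t ≤ (-h) A - -Eh)).card : ℝ) := by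
        exact_mod_cast Finset.card_le_card hsub
    _ ≤ ((Ω.filter (fun A => t ≤ h A - Eh)).card : ℝ)
          + ((Ω.filter (fun A => t ≤ (-h) A - -Eh)).card : ℝ) := by
        exact_mod_cast Finset.card_union_le _ _
    _ ≤ (Ω.card : ℝ) * Real.exp (-2 * t ^ 2 / (r * α ^ 2))
          + (Ω.card : ℝ) * Real.exp (-2 * t ^ 2 / (r * α ^ 2)) := add_le_add h1 h2
    _ = (Ω.card : ℝ) * (2 * Real.exp (-2 * t ^ 2 / (r * α ^ 2))) := by ring
lemma compl_mem_powersetCard (N r : ℕ) (hr : r ≤ N) (A : Finset (Fin N))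
    (hA : A ∈ Finset.powersetCard (N - r) (univ : Finset (Fin N))) :
    Aᶜ ∈ Finset.powersetCard r (univ : Finset (Fin N)) := by
  rw [Finset.mem_powersetCard_univ] at hA ⊢
  rw [Finset.card_compl, Fintype.card_fin, hA]
  omega

lemma sum_compl_eq (N r : ℕ) (hr : r ≤ N) (f : Finset (Fin N) → ℝ) :
    ∑ A ∈ Finset.powersetCard (N - r) (univ : Finset (Fin N)), f Aᶜ
      = ∑ A ∈ Finset.powersetCard r (univ : Finset (Fin N)), f A := by
  apply Finset.sum_nbij' (i := fun A => Aᶜ) (j := fun A => Aᶜ)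
  · exact fun A hA => compl_mem_powersetCard N r hr A hA
  · intro A hA
    rw [Finset.mem_powersetCard_univ] at hA ⊢
    rw [Finset.card_compl, Fintype.card_fin, hA]
  · intro A _; exact compl_compl A
  · intro A _; exact compl_compl A
  · intro A _; rfl

lemma filter_compl_card (N r : ℕ) (hr : r ≤ N) (p : Finset (Fin N) → Prop) [DecidablePred p] :
    ((Finset.powersetCard (N - r) (univ : Finset (Fin N))).filter (fun A => p Aᶜ)).card
      = ((Finset.powersetCard r (univ : Finset (Fin N))).filter p).card := by
  apply Finset.card_nbij' (i := fun A => Aᶜ) (j := fun A => Aᶜ)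
  · intro A hA
    rw [Finset.mem_coe, Finset.mem_filter] at hA ⊢
    exact ⟨compl_mem_powersetCard N r hr A hA.1, hA.2⟩
  · intro A hA
    rw [Finset.mem_coe, Finset.mem_filter] at hA ⊢
    refine ⟨?_, by rw [compl_compl]; exact hA.2⟩
    rw [Finset.mem_powersetCard_univ] at hA ⊢
    rw [Finset.card_compl, Fintype.card_fin, hA.1]
  · intro A _; exact compl_compl A
  · intro A _; exact compl_compl A

lemma card_powersetCard_compl (N r : ℕ) (hr : r ≤ N) :
    (Finset.powersetCard (N - r) (univ : Finset (Fin N))).card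
      = (Finset.powersetCard r (univ : Finset (Fin N))).card := by
  rw [Finset.card_powersetCard, Finset.card_powersetCard, Finset.card_univ, Fintype.card_fin,
    Nat.choose_symm hr]

theorem subsets_tail_bound (N r : ℕ) (hr : r ≤ N) (h : Finset (Fin N) → ℝ)
    (α : ℝ) (hα : 0 ≤ α)
    (hlip : ∀ A A' : Finset (Fin N), A.card = r → A'.card = r →
      (A ∩ A').card = r - 1 → |h A - h A'| ≤ α) :
    ∀ t : ℝ, 0 < t →
      ∀ Eh : ℝ,
      Eh = (∑ A ∈ Finset.powersetCard r (Finset.univ : Finset (Fin N)), h A) /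
          ((Finset.powersetCard r (Finset.univ : Finset (Fin N))).card : ℝ) →
      (((Finset.powersetCard r (Finset.univ : Finset (Fin N))).filter
            (fun A => t ≤ |h A - Eh|)).card : ℝ) /
          ((Finset.powersetCard r (Finset.univ : Finset (Fin N))).card : ℝ)
        ≤ 2 * Real.exp (-2 * t ^ 2 / ((min r (N - r) : ℕ) * α ^ 2)) := by
  intro t ht Eh hEh
  have hΩpos : 0 < (Finset.powersetCard r (univ : Finset (Fin N))).card := by
    rw [Finset.card_powersetCard, Finset.card_univ, Fintype.card_fin]
    exact Nat.choose_pos hr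
  have hΩposR : (0:ℝ) < ((Finset.powersetCard r (univ : Finset (Fin N))).card : ℝ) := by
    exact_mod_cast hΩpos
  by_cases hdeg : ((min r (N - r) : ℕ) : ℝ) * α ^ 2 = 0
  · rw [hdeg, div_zero, Real.exp_zero, mul_one]
    rw [div_le_iff₀ hΩposR]
    have hle : (((Finset.powersetCard r (univ : Finset (Fin N))).filter
        (fun A => t ≤ |h A - Eh|)).card : ℝ)
        ≤ ((Finset.powersetCard r (univ : Finset (Fin N))).card : ℝ) := by
      exact_mod_cast Finset.card_le_card (Finset.filter_subset _ _)
    linarith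
  · have hαpos : 0 < α := by
      rcases eq_or_lt_of_le hα with he | hl
      · exfalso; apply hdeg; rw [← he]; ring
      · exact hl
    have hminpos : 0 < min r (N - r) := by
      rcases Nat.eq_zero_or_pos (min r (N - r)) with he | hp
      · exfalso; apply hdeg; rw [he]; simp
      · exact hp
    have hr0 : 0 < r := by omega
    have hrN : r < N := by omega
    rw [div_le_iff₀ hΩposR]
    rcases le_or_gt r (N - r) with hc | hc
    · rw [min_eq_left hc]
      have key := two_side N r hr0 hr h α hαpos hlip t ht
      rw [← hEh] at key
      calc (((Finset.powersetCard r (univ : Finset (Fin N))).filter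
            (fun A => t ≤ |h A - Eh|)).card : ℝ)
          ≤ ((Finset.powersetCard r (univ : Finset (Fin N))).card : ℝ)
              * (2 * Real.exp (-2 * t ^ 2 / (r * α ^ 2))) := key
        _ = 2 * Real.exp (-2 * t ^ 2 / ((r : ℕ) * α ^ 2))
              * ((Finset.powersetCard r (univ : Finset (Fin N))).card : ℝ) := by ring
    · rw [min_eq_right hc.le]
      set r' := N - r with hr'
      have hr'0 : 0 < r' := by omega
      have hr'N : r' ≤ N := by omega
      have hlip' : ∀ A A' : Finset (Fin N), A.card = r' → A'.card = r' →
          (A ∩ A').card = r' - 1 → |h Aᶜ - h A'ᶜ| ≤ α := by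
        intro A A' hA hA' hAA'
        apply hlip
        · rw [Finset.card_compl, Fintype.card_fin, hA]; omega
        · rw [Finset.card_compl, Fintype.card_fin, hA']; omega
        · rw [← Finset.compl_union, Finset.card_compl, Fintype.card_fin]
          have hu : (A ∪ A').card + (A ∩ A').card = A.card + A'.card :=
            Finset.card_union_add_card_inter A A'
          rw [hA, hA', hAA'] at hu
          omega
      have key := two_side N r' hr'0 hr'N (fun A => h Aᶜ) α hαpos hlip' t ht
      have hE' : (∑ B ∈ Finset.powersetCard r' (univ : Finset (Fin N)), h Bᶜ) /
          ((Finset.powersetCard r' (univ : Finset (Fin N))).card : ℝ) = Eh := by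
        rw [hr', sum_compl_eq N r hr, card_powersetCard_compl N r hr, hEh]
      simp only [hE'] at key
      have hfil : ((Finset.powersetCard r' (univ : Finset (Fin N))).filter
            (fun A => t ≤ |h Aᶜ - Eh|)).card
          = ((Finset.powersetCard r (univ : Finset (Fin N))).filter
            (fun A => t ≤ |h A - Eh|)).card := by
        rw [hr']
        exact filter_compl_card N r hr (fun A => t ≤ |h A - Eh|)
      rw [hfil] at key
      have hcards : ((Finset.powersetCard r' (univ : Finset (Fin N))).card : ℝ)
          = ((Finset.powersetCard r (univ : Finset (Fin N))).card : ℝ) := by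
        rw [hr']
        exact_mod_cast card_powersetCard_compl N r hr
      rw [hcards] at key
      calc (((Finset.powersetCard r (univ : Finset (Fin N))).filter
            (fun A => t ≤ |h A - Eh|)).card : ℝ)
          ≤ ((Finset.powersetCard r (univ : Finset (Fin N))).card : ℝ)
              * (2 * Real.exp (-2 * t ^ 2 / (r' * α ^ 2))) := key
        _ = 2 * Real.exp (-2 * t ^ 2 / ((r' : ℕ) * α ^ 2))
              * ((Finset.powersetCard r (univ : Finset (Fin N))).card : ℝ) := by ring
end
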